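/- arXiv:2109.03129 — 5 statements merged into one kernel-verified Lean document; each statement's English description precedes it below -/
import Mathlib

section
/- For all n, e ∈ ℕ with 1 ≤ e ≤ ⌊n²/4⌋, one has s(n,e) − s_b(n,e) ≤ ((1 + 16·e^{−3/4})/e^{3/4}) · s(n,e). -/
open Matrix

private lemma inner_eq_dot {m : ℕ} (v w : Fin m → ℝ) :
    (inner ℝ ((WithLp.equiv 2 _).symm v) ((WithLp.equiv 2 _).symm w) : ℝ) = v ⬝ᵥ w := by
  rw [PiLp.inner_apply]
  simp [dotProduct, RCLike.inner_apply, mul_comm]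

/-- Expansion of a quadratic form in an orthonormal eigenbasis. -/
lemma expand_dot {m : ℕ} (b : OrthonormalBasis (Fin m) ℝ (EuclideanSpace ℝ (Fin m)))
    (M : Matrix (Fin m) (Fin m) ℝ) (hsym : Mᵀ = M) (μ : Fin m → ℝ)
    (hM : ∀ j, M *ᵥ ⇑(b j) = μ j • ⇑(b j)) (v w : Fin m → ℝ) :
    v ⬝ᵥ (M *ᵥ w) = ∑ j, μ j * ((⇑(b j) ⬝ᵥ v) * (⇑(b j) ⬝ᵥ w)) := by
  classical
  have key : ∀ j : Fin m, ⇑(b j) ⬝ᵥ (M *ᵥ w) = μ j * (⇑(b j) ⬝ᵥ w) := by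
    intro j
    have h1 : ⇑(b j) ᵥ* M = M *ᵥ ⇑(b j) := by
      conv_lhs => rw [← hsym]
      rw [Matrix.vecMul_transpose]
    rw [Matrix.dotProduct_mulVec, h1, hM j, smul_dotProduct]
    rfl
  have h2 := b.sum_inner_mul_inner ((WithLp.equiv 2 _).symm v) ((WithLp.equiv 2 _).symm (M *ᵥ w))
  rw [inner_eq_dot] at h2
  rw [← h2]
  apply Finset.sum_congr rfl
  intro j _
  have e1 : (inner ℝ ((WithLp.equiv 2 _).symm v) (b j) : ℝ) = ⇑(b j) ⬝ᵥ v := by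
    rw [show (b j : EuclideanSpace ℝ (Fin m)) = (WithLp.equiv 2 _).symm ⇑(b j) from rfl,
      inner_eq_dot, dotProduct_comm]
    simp
  have e2 : (inner ℝ (b j) ((WithLp.equiv 2 _).symm (M *ᵥ w)) : ℝ) = ⇑(b j) ⬝ᵥ (M *ᵥ w) := by
    rw [show (b j : EuclideanSpace ℝ (Fin m)) = (WithLp.equiv 2 _).symm ⇑(b j) from rfl,
      inner_eq_dot]
    simp
  rw [e1, e2, key j]
  ring

/- The adjacency matrix (over `ℝ`) of a simple graph on `Fin n`. -/
open scoped Classical in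
noncomputable def adjMat {n : ℕ} (G : SimpleGraph (Fin n)) : Matrix (Fin n) (Fin n) ℝ :=
  fun i j => if G.Adj i j then 1 else 0

lemma adjMat_isHermitian {n : ℕ} (G : SimpleGraph (Fin n)) :
    (adjMat G).IsHermitian := by
  classical
  unfold Matrix.IsHermitian
  ext i j
  simp only [Matrix.conjTranspose_apply, adjMat]
  rw [show star (if G.Adj j i then (1:ℝ) else 0) = (if G.Adj j i then (1:ℝ) else 0) from
    star_trivial _]
  exact if_congr (G.adj_comm j i) rfl rfl

/-- The eigenvalues of the adjacency matrix of `G`. -/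
noncomputable def graphEigs {n : ℕ} (G : SimpleGraph (Fin n)) : Fin n → ℝ :=
  (adjMat_isHermitian G).eigenvalues

/-- `λ₁(G)`, the largest adjacency eigenvalue. -/
noncomputable def lamMax {n : ℕ} (G : SimpleGraph (Fin n)) : ℝ := ⨆ i, graphEigs G i

/-- `λₙ(G)`, the smallest adjacency eigenvalue. -/
noncomputable def lamMin {n : ℕ} (G : SimpleGraph (Fin n)) : ℝ := ⨅ i, graphEigs G i

/-- The spread `s(G) = λ₁(G) - λₙ(G)`. -/
noncomputable def spread {n : ℕ} (G : SimpleGraph (Fin n)) : ℝ := lamMax G - lamMin G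

lemma adjMat_symm {n : ℕ} (G : SimpleGraph (Fin n)) : (adjMat G)ᵀ = adjMat G := by
  have h := adjMat_isHermitian G
  ext i j
  have h2 : star (adjMat G j i) = adjMat G i j := congrFun (congrFun h i) j
  simpa using h2

lemma adjMat_expand {n : ℕ} (G : SimpleGraph (Fin n)) (v w : Fin n → ℝ) :
    v ⬝ᵥ (adjMat G *ᵥ w) = ∑ j, graphEigs G j *
      ((⇑((adjMat_isHermitian G).eigenvectorBasis j) ⬝ᵥ v) *
       (⇑((adjMat_isHermitian G).eigenvectorBasis j) ⬝ᵥ w)) :=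
  expand_dot _ _ (adjMat_symm G) _ (adjMat_isHermitian G).mulVec_eigenvectorBasis v w

lemma dot_expand {n : ℕ} (G : SimpleGraph (Fin n)) (v w : Fin n → ℝ) :
    v ⬝ᵥ w = ∑ j,
      ((⇑((adjMat_isHermitian G).eigenvectorBasis j) ⬝ᵥ v) *
       (⇑((adjMat_isHermitian G).eigenvectorBasis j) ⬝ᵥ w)) := by
  have h := expand_dot ((adjMat_isHermitian G).eigenvectorBasis) (1 : Matrix (Fin n) (Fin n) ℝ)
    (Matrix.transpose_one) (fun _ => 1) (fun j => by simp) v w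
  simpa using h

lemma bdd_eigs {n : ℕ} (G : SimpleGraph (Fin n)) : BddAbove (Set.range (graphEigs G)) :=
  (Set.finite_range _).bddAbove

lemma bdd_eigs' {n : ℕ} (G : SimpleGraph (Fin n)) : BddBelow (Set.range (graphEigs G)) :=
  (Set.finite_range _).bddBelow

lemma dot_le_lamMax {n : ℕ} (G : SimpleGraph (Fin n)) (x : Fin n → ℝ) :
    x ⬝ᵥ (adjMat G *ᵥ x) ≤ lamMax G * (x ⬝ᵥ x) := by
  rw [adjMat_expand G x x, dot_expand G x x, Finset.mul_sum]
  apply Finset.sum_le_sum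
  intro j _
  have h1 : graphEigs G j ≤ lamMax G := le_ciSup (bdd_eigs G) j
  have h2 : (0:ℝ) ≤ (⇑((adjMat_isHermitian G).eigenvectorBasis j) ⬝ᵥ x) *
      (⇑((adjMat_isHermitian G).eigenvectorBasis j) ⬝ᵥ x) := mul_self_nonneg _
  nlinarith

lemma lamMin_le_dot {n : ℕ} (G : SimpleGraph (Fin n)) (x : Fin n → ℝ) :
    lamMin G * (x ⬝ᵥ x) ≤ x ⬝ᵥ (adjMat G *ᵥ x) := by
  rw [adjMat_expand G x x, dot_expand G x x, Finset.mul_sum]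
  apply Finset.sum_le_sum
  intro j _
  have h1 : lamMin G ≤ graphEigs G j := ciInf_le (bdd_eigs' G) j
  have h2 : (0:ℝ) ≤ (⇑((adjMat_isHermitian G).eigenvectorBasis j) ⬝ᵥ x) *
      (⇑((adjMat_isHermitian G).eigenvectorBasis j) ⬝ᵥ x) := mul_self_nonneg _
  nlinarith

lemma sum_sq_eigs {n : ℕ} (G : SimpleGraph (Fin n)) :
    ∑ j, (graphEigs G j)^2 = ∑ i, ∑ j, (adjMat G i j)^2 := by
  classical
  set A := adjMat G with hA
  set b := (adjMat_isHermitian G).eigenvectorBasis with hb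
  have hsym : (A * A)ᵀ = A * A := by
    rw [Matrix.transpose_mul, adjMat_symm]
  have hMv : ∀ j, (A * A) *ᵥ ⇑(b j) = ((graphEigs G j)^2) • ⇑(b j) := by
    intro j
    rw [← Matrix.mulVec_mulVec, (adjMat_isHermitian G).mulVec_eigenvectorBasis,
      Matrix.mulVec_smul, (adjMat_isHermitian G).mulVec_eigenvectorBasis, smul_smul, sq]
    rfl
  have key : ∀ i : Fin n, (Pi.single i 1 : Fin n → ℝ) ⬝ᵥ ((A * A) *ᵥ Pi.single i 1)
      = ∑ j, (graphEigs G j)^2 * ((b j) i * (b j) i) := by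
    intro i
    rw [expand_dot b (A*A) hsym _ hMv]
    apply Finset.sum_congr rfl
    intro j _
    rw [dotProduct_single, mul_one]
  have lhs1 : ∑ i, (Pi.single i 1 : Fin n → ℝ) ⬝ᵥ ((A * A) *ᵥ Pi.single i 1)
      = ∑ i, ∑ j, A i j ^2 := by
    apply Finset.sum_congr rfl
    intro i _
    rw [single_dotProduct, one_mul]
    rw [show ((A * A) *ᵥ Pi.single i 1) i = (A * A) i i from by
      rw [Matrix.mulVec_single]; simp]
    rw [show (A * A) i i = ∑ k, A i k * A k i from Matrix.mul_apply]
    refine Finset.sum_congr rfl (fun k _ => ?_)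
    rw [show A k i = A i k from (congrFun (congrFun (adjMat_symm G) k) i).symm.trans rfl, ← sq]
  have norm1 : ∀ j, (⇑(b j) : Fin n → ℝ) ⬝ᵥ ⇑(b j) = 1 := by
    intro j
    have h := orthonormal_iff_ite.mp b.orthonormal j j
    simp only [if_pos rfl] at h
    rw [← inner_eq_dot]
    exact h
  calc ∑ j, (graphEigs G j)^2 = ∑ j, (graphEigs G j)^2 * ((⇑(b j) : Fin n → ℝ) ⬝ᵥ ⇑(b j)) := by
        apply Finset.sum_congr rfl; intro j _; rw [norm1 j, mul_one]
    _ = ∑ j, ∑ i, (graphEigs G j)^2 * ((b j) i * (b j) i) := by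
        apply Finset.sum_congr rfl; intro j _
        rw [show (⇑(b j) : Fin n → ℝ) ⬝ᵥ ⇑(b j) = ∑ i, (b j) i * (b j) i from rfl,
          Finset.mul_sum]
    _ = ∑ i, ∑ j, (graphEigs G j)^2 * ((b j) i * (b j) i) := Finset.sum_comm
    _ = ∑ i, ∑ j, A i j ^2 := by rw [← lhs1]; exact (Finset.sum_congr rfl fun i _ => (key i).symm)

lemma sum_adj_sq {n : ℕ} (G : SimpleGraph (Fin n)) :
    ∑ i, ∑ j, (adjMat G i j)^2 = 2 * (G.edgeSet.ncard : ℝ) := by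
  classical
  have h1 : ∀ i j, (adjMat G i j)^2 = if G.Adj i j then (1:ℝ) else 0 := by
    intro i j
    simp only [adjMat]
    split <;> norm_num
  have h2 : ∀ i : Fin n, ∑ j, (adjMat G i j)^2 = (G.degree i : ℝ) := by
    intro i
    rw [Finset.sum_congr rfl (fun j _ => h1 i j)]
    rw [Finset.sum_boole]
    congr 1
    rw [← SimpleGraph.neighborFinset_eq_filter]
    rfl
  rw [Finset.sum_congr rfl (fun i _ => h2 i)]
  rw [← Nat.cast_sum]
  rw [SimpleGraph.sum_degrees_eq_twice_card_edges]
  have h3 : G.edgeSet.ncard = G.edgeFinset.card := by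
    simp [Set.ncard_eq_toFinset_card', SimpleGraph.edgeFinset]
  rw [h3]
  push_cast
  ring

lemma spread_nonneg' {n : ℕ} (hn : 0 < n) (G : SimpleGraph (Fin n)) : 0 ≤ spread G := by
  haveI : Nonempty (Fin n) := ⟨⟨0, hn⟩⟩
  have h1 : lamMin G ≤ graphEigs G ⟨0, hn⟩ := ciInf_le (bdd_eigs' G) _
  have h2 : graphEigs G ⟨0, hn⟩ ≤ lamMax G := le_ciSup (bdd_eigs G) _
  unfold spread; linarith

lemma spread_le_two_sqrt {n e : ℕ} (hn : 0 < n) (G : SimpleGraph (Fin n))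
    (he : G.edgeSet.ncard = e) : spread G ≤ 2 * Real.sqrt e := by
  classical
  haveI : Nonempty (Fin n) := ⟨⟨0, hn⟩⟩
  obtain ⟨i, hi⟩ := Finite.exists_max (graphEigs G)
  obtain ⟨k, hk⟩ := Finite.exists_min (graphEigs G)
  have hmax : lamMax G = graphEigs G i :=
    le_antisymm (ciSup_le hi) (le_ciSup (bdd_eigs G) i)
  have hmin : lamMin G = graphEigs G k :=
    le_antisymm (ciInf_le (bdd_eigs' G) k) (le_ciInf hk)
  have hsum : ∑ j, (graphEigs G j)^2 = 2 * (e : ℝ) := by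
    rw [sum_sq_eigs, sum_adj_sq, he]
  have hse : (0:ℝ) ≤ Real.sqrt e := Real.sqrt_nonneg _
  by_cases hik : i = k
  · have : spread G = 0 := by unfold spread; rw [hmax, hmin, hik, sub_self]
    linarith
  · have hpair : (graphEigs G i)^2 + (graphEigs G k)^2 ≤ 2 * (e:ℝ) := by
      rw [← hsum]
      rw [← Finset.sum_pair (f := fun j => graphEigs G j ^ 2) hik]
      exact Finset.sum_le_sum_of_subset_of_nonneg (Finset.subset_univ _)
        (fun j _ _ => sq_nonneg _)
    have hnn : 0 ≤ spread G := spread_nonneg' hn G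
    have hsq : (spread G)^2 ≤ 4 * (e:ℝ) := by
      have : spread G = graphEigs G i - graphEigs G k := by
        unfold spread; rw [hmax, hmin]
      rw [this] at *
      nlinarith [sq_nonneg (graphEigs G i + graphEigs G k)]
    have h4 : (4:ℝ) * e = (2 * Real.sqrt e)^2 := by
      rw [mul_pow, Real.sq_sqrt (by positivity)]
      ring
    calc spread G = Real.sqrt ((spread G)^2) := (Real.sqrt_sq hnn).symm
      _ ≤ Real.sqrt ((2 * Real.sqrt e)^2) := Real.sqrt_le_sqrt (by linarith)
      _ = 2 * Real.sqrt e := Real.sqrt_sq (by positivity)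

/-! ### The bipartite construction -/

def goodPair (a b δ : ℕ) (i j : ℕ) : Prop :=
  i < a ∧ a ≤ j ∧ j < a + b ∧ (i = 0 → j < a + b - δ)

instance (a b δ i j : ℕ) : Decidable (goodPair a b δ i j) := by
  unfold goodPair; infer_instance

def bipG (n a b δ : ℕ) : SimpleGraph (Fin n) where
  Adj x y := goodPair a b δ x.val y.val ∨ goodPair a b δ y.val x.val
  symm := by constructor; intro x y h; tauto
  loopless := by
    constructor; intro x h
    rcases h with h | h <;> · obtain ⟨h1, h2, -⟩ := h; omega

private lemma card_val_Ico {n : ℕ} (lo hi : ℕ) (h : hi ≤ n) :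
    (Finset.univ.filter fun v : Fin n => lo ≤ v.val ∧ v.val < hi).card = hi - lo := by
  rw [← Nat.card_Ico lo hi]
  apply Finset.card_bij (fun (v : Fin n) _ => v.val)
  · intro v hv
    simp only [Finset.mem_filter] at hv
    exact Finset.mem_Ico.mpr hv.2
  · intro v hv w hw hvw
    exact Fin.ext hvw
  · intro m hm
    rw [Finset.mem_Ico] at hm
    exact ⟨⟨m, lt_of_lt_of_le hm.2 h⟩, by simp [hm.1, hm.2], rfl⟩

section BipCount

variable {n : ℕ} {a b δ : ℕ}

/-- The finset of "good pairs" (left endpoint, right endpoint). -/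
noncomputable def GPfin (n a b δ : ℕ) : Finset (Fin n × Fin n) :=
  Finset.univ.filter fun p => goodPair a b δ p.1.val p.2.val

lemma GPfin_card (ha : 1 ≤ a) (hδ : δ ≤ b) (hn : a + b ≤ n) :
    (GPfin n a b δ).card = a * b - δ := by
  classical
  have h0n : 0 < n := lt_of_lt_of_le (by omega) hn
  set SA : Finset (Fin n) := Finset.univ.filter fun v : Fin n => 0 ≤ v.val ∧ v.val < a with hSA
  set SB : Finset (Fin n) := Finset.univ.filter fun v : Fin n => a ≤ v.val ∧ v.val < a + b with hSB
  set SD : Finset (Fin n) := Finset.univ.filter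
    fun v : Fin n => a + b - δ ≤ v.val ∧ v.val < a + b with hSD
  set v0 : Fin n := ⟨0, h0n⟩ with hv0
  have hv0v : (v0 : ℕ) = 0 := rfl
  have key : GPfin n a b δ = (SA ×ˢ SB) \ ({v0} ×ˢ SD) := by
    ext p
    simp only [GPfin, hSA, hSB, hSD, Finset.mem_filter, Finset.mem_sdiff, Finset.mem_product,
      Finset.mem_singleton, Finset.mem_univ, true_and, Fin.ext_iff, hv0v]
    simp only [goodPair]
    constructor
    · rintro ⟨h1, h2, h3, h4⟩
      refine ⟨⟨⟨Nat.zero_le _, h1⟩, h2, h3⟩, ?_⟩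
      rintro ⟨hz, hge, -⟩
      have := h4 hz
      omega
    · rintro ⟨⟨⟨-, h1⟩, h2, h3⟩, h4⟩
      refine ⟨h1, h2, h3, fun hz => ?_⟩
      by_contra hcon
      exact h4 ⟨hz, by omega, h3⟩
  rw [key]
  have hsub : ({v0} ×ˢ SD) ⊆ (SA ×ˢ SB) := by
    apply Finset.product_subset_product
    · intro z hz
      simp only [Finset.mem_singleton] at hz
      subst hz
      simp only [hSA, Finset.mem_filter, Finset.mem_univ, true_and]
      exact ⟨Nat.zero_le _, ha⟩
    · intro z hz
      simp only [hSD, hSB, Finset.mem_filter, Finset.mem_univ, true_and] at hz ⊢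
      omega
  rw [Finset.card_sdiff_of_subset hsub]
  rw [Finset.card_product, Finset.card_product, Finset.card_singleton]
  have c1 : SA.card = a := by
    rw [hSA, card_val_Ico 0 a (by omega)]; omega
  have c2 : SB.card = b := by
    rw [hSB, card_val_Ico a (a+b) (by omega)]; omega
  have c3 : SD.card = δ := by
    rw [hSD, card_val_Ico (a+b-δ) (a+b) (by omega)]; omega
  rw [c1, c2, c3, one_mul]

lemma bipG_edgeSet (ha : 1 ≤ a) :
    (bipG n a b δ).edgeSet = ↑((GPfin n a b δ).image fun p => s(p.1, p.2)) := by
  classical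
  ext z
  induction z using Sym2.ind with
  | _ x y =>
    simp only [SimpleGraph.mem_edgeSet, Finset.coe_image, Set.mem_image, Finset.mem_coe,
      GPfin, Finset.mem_filter, Finset.mem_univ, true_and, bipG]
    constructor
    · rintro (h | h)
      · exact ⟨(x, y), h, rfl⟩
      · exact ⟨(y, x), h, Sym2.eq_swap⟩
    · rintro ⟨p, hp, hz⟩
      rw [Sym2.eq_iff] at hz
      rcases hz with ⟨h1, h2⟩ | ⟨h1, h2⟩
      · left; rwa [h1, h2] at hp
      · right; rwa [h1, h2] at hp

lemma bipG_ncard (ha : 1 ≤ a) (hδ : δ ≤ b) (hn : a + b ≤ n) :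
    (bipG n a b δ).edgeSet.ncard = a * b - δ := by
  classical
  rw [bipG_edgeSet ha, Set.ncard_coe_finset]
  rw [Finset.card_image_of_injOn, GPfin_card ha hδ hn]
  intro p hp q hq hpq
  simp only [Finset.mem_coe, GPfin, Finset.mem_filter, Finset.mem_univ, true_and] at hp hq
  simp only [goodPair] at hp hq
  simp only [Sym2.eq_iff] at hpq
  rcases hpq with ⟨h1, h2⟩ | ⟨h1, h2⟩
  · exact Prod.ext h1 h2
  · exfalso
    have e1 : (p.1 : ℕ) < a := hp.1
    have e2 : a ≤ (q.2 : ℕ) := hq.2.1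
    have e3 : (p.1 : ℕ) = (q.2 : ℕ) := congrArg Fin.val h1
    omega

lemma bipG_colorable : (bipG n a b δ).Colorable 2 := by
  refine ⟨SimpleGraph.Coloring.mk (fun v => if v.val < a then 0 else 1) ?_⟩
  intro x y hxy
  rcases hxy with h | h <;>
  · obtain ⟨h1, h2, -⟩ := h
    simp only [if_pos, if_neg, h1, not_lt.mpr h2]
    simp [if_pos h1, if_neg (not_lt.mpr h2)]

end BipCount

section Rayleigh

variable {n : ℕ} {a b δ : ℕ}

noncomputable def xvec (n a b : ℕ) (t : ℝ) : Fin n → ℝ :=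
  fun v => if v.val < a then Real.sqrt b else if v.val < a + b then t else 0

lemma xvec_dot (hn : a + b ≤ n) (t : ℝ) :
    xvec n a b t ⬝ᵥ xvec n a b t = a * b + b * t^2 := by
  classical
  have hterm : ∀ v : Fin n, xvec n a b t v * xvec n a b t v
      = (if v.val < a then (b:ℝ) else if v.val < a + b then t^2 else 0) := by
    intro v
    unfold xvec
    split_ifs with h1 h2
    · exact Real.mul_self_sqrt (by positivity)
    · exact (sq t).symm
    · ring
  unfold dotProduct
  rw [Finset.sum_congr rfl (fun v _ => hterm v)]
  rw [Finset.sum_ite, Finset.sum_ite]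
  have c1 : (Finset.univ.filter fun v : Fin n => v.val < a).card = a := by
    have : (Finset.univ.filter fun v : Fin n => v.val < a)
        = Finset.univ.filter fun v : Fin n => 0 ≤ v.val ∧ v.val < a := by
      apply Finset.filter_congr; intro v _; simp
    rw [this, card_val_Ico 0 a (by omega)]; omega
  have c2 : ((Finset.univ.filter fun v : Fin n => ¬ v.val < a).filter
      fun v : Fin n => v.val < a + b).card = b := by
    rw [Finset.filter_filter]
    have : (Finset.univ.filter fun v : Fin n => ¬ v.val < a ∧ v.val < a + b)
        = Finset.univ.filter fun v : Fin n => a ≤ v.val ∧ v.val < a + b := by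
      apply Finset.filter_congr; intro v _; simp [not_lt]
    rw [this, card_val_Ico a (a+b) hn]; omega
  rw [Finset.sum_const, Finset.sum_const, Finset.sum_const, c1, c2]
  simp only [nsmul_eq_mul, smul_zero, add_zero]
  try push_cast
  try ring

lemma xvec_dot_adj (ha : 1 ≤ a) (hδ : δ ≤ b) (hn : a + b ≤ n) (t u : ℝ) :
    xvec n a b t ⬝ᵥ (adjMat (bipG n a b δ) *ᵥ xvec n a b u)
      = ((a*b - δ : ℕ) : ℝ) * (Real.sqrt b * u + t * Real.sqrt b) := by
  classical
  set x := xvec n a b t with hx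
  set y := xvec n a b u with hy
  set M := adjMat (bipG n a b δ) with hM
  have step1 : x ⬝ᵥ (M *ᵥ y) = ∑ p ∈ Finset.univ ×ˢ Finset.univ,
      M p.1 p.2 * (x p.1 * y p.2) := by
    rw [Finset.sum_product]
    unfold dotProduct Matrix.mulVec dotProduct
    apply Finset.sum_congr rfl
    intro i _
    rw [Finset.mul_sum]
    apply Finset.sum_congr rfl
    intro j _
    ring
  have step2 : ∀ p : Fin n × Fin n, M p.1 p.2 * (x p.1 * y p.2)
      = if (bipG n a b δ).Adj p.1 p.2 then x p.1 * y p.2 else 0 := by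
    intro p
    rw [hM]
    unfold adjMat
    split_ifs with h <;> simp [h]
  rw [step1, Finset.sum_congr rfl (fun p _ => step2 p)]
  rw [← Finset.sum_filter]
  have hfil : (Finset.univ ×ˢ Finset.univ).filter
      (fun p : Fin n × Fin n => (bipG n a b δ).Adj p.1 p.2)
      = (GPfin n a b δ) ∪ (Finset.univ.filter
          fun p : Fin n × Fin n => goodPair a b δ p.2.val p.1.val) := by
    rw [Finset.univ_product_univ,
      show GPfin n a b δ = Finset.univ.filter
        (fun p : Fin n × Fin n => goodPair a b δ p.1.val p.2.val) from rfl,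
      ← Finset.filter_or]
    apply Finset.filter_congr
    intro p _
    rfl
  rw [hfil]
  have hdisj : Disjoint (GPfin n a b δ)
      (Finset.univ.filter fun p : Fin n × Fin n => goodPair a b δ p.2.val p.1.val) := by
    rw [Finset.disjoint_left]
    intro p hp hq
    simp only [GPfin, Finset.mem_filter, Finset.mem_univ, true_and] at hp hq
    simp only [goodPair] at hp hq
    omega
  rw [Finset.sum_union hdisj]
  have hswap : ∑ p ∈ (Finset.univ.filter
      fun p : Fin n × Fin n => goodPair a b δ p.2.val p.1.val), x p.1 * y p.2
      = ∑ p ∈ GPfin n a b δ, x p.2 * y p.1 := by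
    apply Finset.sum_nbij' (fun p => Prod.swap p) (fun p => Prod.swap p)
    · intro p hp
      simp only [Finset.mem_filter, Finset.mem_univ, true_and, GPfin] at hp ⊢
      exact hp
    · intro p hp
      simp only [Finset.mem_filter, Finset.mem_univ, true_and, GPfin] at hp ⊢
      exact hp
    · intro p _; rfl
    · intro p _; rfl
    · intro p _; rfl
  rw [hswap]
  have hval : ∀ p ∈ GPfin n a b δ, x p.1 * y p.2 = Real.sqrt b * u := by
    intro p hp
    simp only [GPfin, Finset.mem_filter, Finset.mem_univ, true_and] at hp
    simp only [goodPair] at hp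
    rw [hx, hy]
    unfold xvec
    rw [if_pos hp.1, if_neg (by omega), if_pos hp.2.2.1]
  have hval2 : ∀ p ∈ GPfin n a b δ, x p.2 * y p.1 = t * Real.sqrt b := by
    intro p hp
    simp only [GPfin, Finset.mem_filter, Finset.mem_univ, true_and] at hp
    simp only [goodPair] at hp
    rw [hx, hy]
    unfold xvec
    rw [if_neg (by omega), if_pos hp.2.2.1, if_pos hp.1]
  rw [Finset.sum_congr rfl hval, Finset.sum_congr rfl hval2,
    Finset.sum_const, Finset.sum_const, GPfin_card ha hδ hn]
  simp only [nsmul_eq_mul]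
  ring

end Rayleigh

lemma spread_bipG_ge {n a b δ : ℕ} (ha : 1 ≤ a) (hb : 1 ≤ b) (hδ : δ ≤ b) (hn : a + b ≤ n) :
    2 * ((a*b - δ : ℕ) : ℝ) / Real.sqrt ((a:ℝ) * b) ≤ spread (bipG n a b δ) := by
  have hab : (0:ℝ) < (a:ℝ) * b := by
    have : (1:ℝ) ≤ (a:ℝ) := by exact_mod_cast ha
    have : (1:ℝ) ≤ (b:ℝ) := by exact_mod_cast hb
    nlinarith
  set S := Real.sqrt ((a:ℝ) * b) with hS
  have hSpos : 0 < S := Real.sqrt_pos.mpr hab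
  have hS2 : S * S = (a:ℝ) * b := Real.mul_self_sqrt (le_of_lt hab)
  have hsab : S = Real.sqrt a * Real.sqrt b := Real.sqrt_mul (by positivity) _
  set E := ((a*b - δ : ℕ) : ℝ) with hE
  have hEnn : 0 ≤ E := Nat.cast_nonneg _
  -- upper Rayleigh vector
  have hx := dot_le_lamMax (bipG n a b δ) (xvec n a b (Real.sqrt a))
  rw [xvec_dot_adj ha hδ hn, xvec_dot hn] at hx
  have hsqa : (Real.sqrt a)^2 = (a:ℝ) := Real.sq_sqrt (by positivity)
  have hx' : 2 * E * S ≤ lamMax (bipG n a b δ) * (2 * (S*S)) := by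
    calc 2 * E * S = E * (Real.sqrt b * Real.sqrt a + Real.sqrt a * Real.sqrt b) := by
          rw [hsab]; ring
      _ ≤ lamMax (bipG n a b δ) * ((a:ℝ) * b + b * (Real.sqrt a)^2) := hx
      _ = lamMax (bipG n a b δ) * (2 * (S*S)) := by rw [hsqa, hS2]; ring
  have hmax : E / S ≤ lamMax (bipG n a b δ) := by
    rw [div_le_iff₀ hSpos]
    have h2S : (0:ℝ) < 2 * S := by positivity
    apply le_of_mul_le_mul_right _ h2S
    calc E * (2 * S) = 2 * E * S := by ring
      _ ≤ lamMax (bipG n a b δ) * (2 * (S*S)) := hx'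
      _ = lamMax (bipG n a b δ) * S * (2 * S) := by ring
  -- lower Rayleigh vector
  have hy := lamMin_le_dot (bipG n a b δ) (xvec n a b (- Real.sqrt a))
  rw [xvec_dot_adj ha hδ hn, xvec_dot hn] at hy
  have hy' : lamMin (bipG n a b δ) * (2 * (S*S)) ≤ -(2 * E * S) := by
    calc lamMin (bipG n a b δ) * (2 * (S*S))
        = lamMin (bipG n a b δ) * ((a:ℝ) * b + b * (- Real.sqrt a)^2) := by
          rw [neg_pow, hsqa, hS2]; ring
      _ ≤ E * (Real.sqrt b * (- Real.sqrt a) + (- Real.sqrt a) * Real.sqrt b) := hy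
      _ = -(2 * E * S) := by rw [hsab]; ring
  have hmin : lamMin (bipG n a b δ) ≤ -(E / S) := by
    have h2S : (0:ℝ) < 2 * S := by positivity
    rw [show -(E/S) = (-E)/S from by ring, le_div_iff₀ hSpos]
    apply le_of_mul_le_mul_right _ h2S
    calc lamMin (bipG n a b δ) * S * (2 * S)
        = lamMin (bipG n a b δ) * (2 * (S*S)) := by ring
      _ ≤ -(2 * E * S) := hy'
      _ = -E * (2 * S) := by ring
  have : spread (bipG n a b δ) = lamMax (bipG n a b δ) - lamMin (bipG n a b δ) := rfl
  rw [this]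
  have : 2 * E / S = E / S + E / S := by ring
  rw [this]
  linarith

lemma key_exists (n e : ℕ) (he : 1 ≤ e) (h4 : 4*e ≤ n^2) :
    ∃ a b δ : ℕ, 1 ≤ a ∧ 1 ≤ b ∧ δ ≤ b ∧ a + b ≤ n ∧ a * b = e + δ ∧
      δ ≤ 2 * Nat.sqrt (Nat.sqrt e) := by
  have hnn : 4 * e ≤ n * n := by rw [← pow_two]; exact h4
  have ht1 : Nat.sqrt e * Nat.sqrt e ≤ e := by
    have := Nat.sqrt_le' e; rwa [pow_two] at this
  have ht2 : e < (Nat.sqrt e + 1) * (Nat.sqrt e + 1) := by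
    have := Nat.lt_succ_sqrt' e; rwa [pow_two] at this
  set t := Nat.sqrt e with ht
  clear_value t
  have ht0 : 1 ≤ t := by
    by_contra hc
    push_neg at hc
    interval_cases t <;> omega
  by_cases hsq : e = t * t
  · refine ⟨t, t, 0, ht0, ht0, Nat.zero_le _, ?_, by omega, Nat.zero_le _⟩
    by_contra hc
    push_neg at hc
    have h5 : n * n ≤ (2*t-1) * (2*t-1) := Nat.mul_le_mul (by omega) (by omega)
    have hexp : (2*t-1) * (2*t-1) + 4*t = 4 * (t*t) + 1 := by
      zify [show 1 ≤ 2*t by omega]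
      ring
    omega
  · have he1 : t * t < e := lt_of_le_of_ne ht1 fun h => hsq h.symm
    have hn1 : 2*t + 1 ≤ n := by
      by_contra hc
      push_neg at hc
      have h5 : n * n ≤ (2*t) * (2*t) := Nat.mul_le_mul (by omega) (by omega)
      have hexp : (2*t) * (2*t) = 4 * (t*t) := by ring
      omega
    have hqq : (t+1) * (t+1) = t*t + 2*t + 1 := by ring
    obtain ⟨d, hde⟩ : ∃ d, e + d = (t+1)*(t+1) := ⟨(t+1)*(t+1) - e, by omega⟩
    have hd1 : 1 ≤ d := by omega
    have hd2 : d ≤ 2*t := by omega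
    by_cases hA : d ≤ t
    · -- case A : sides (t+1-j, t+1+j), sum 2t+2 ≤ n
      have hnA : 2*t + 2 ≤ n := by
        by_contra hc
        push_neg at hc
        have h5 : n * n ≤ (2*t+1) * (2*t+1) := Nat.mul_le_mul (by omega) (by omega)
        have hexp : (2*t+1) * (2*t+1) = 4*(t*t) + 4*t + 1 := by ring
        omega
      have hj1 : Nat.sqrt d * Nat.sqrt d ≤ d := by
        have := Nat.sqrt_le' d; rwa [pow_two] at this
      have hj2 : d < (Nat.sqrt d + 1) * (Nat.sqrt d + 1) := by
        have := Nat.lt_succ_sqrt' d; rwa [pow_two] at this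
      have hjt : Nat.sqrt d ≤ Nat.sqrt t := Nat.sqrt_le_sqrt hA
      have hjself : Nat.sqrt d ≤ d := Nat.sqrt_le_self d
      have htself : Nat.sqrt t ≤ t := Nat.sqrt_le_self t
      set j := Nat.sqrt d with hj
      clear_value j
      have hjexp : (j+1)*(j+1) = j*j + 2*j + 1 := by ring
      have hprod : (t+1-j) * (t+1+j) + j*j = (t+1)*(t+1) := by
        zify [show j ≤ t+1 by omega]
        ring
      exact ⟨t+1-j, t+1+j, d - j*j, by omega, by omega, by omega, by omega, by omega, by omega⟩
    · -- case B : sides summing to 2t+1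
      push_neg at hA
      obtain ⟨D, hDe⟩ : ∃ D, D + (t+1) = d := ⟨d - (t+1), by omega⟩
      have hj01 : Nat.sqrt D * Nat.sqrt D ≤ D := by
        have := Nat.sqrt_le' D; rwa [pow_two] at this
      have hj02 : D < (Nat.sqrt D + 1) * (Nat.sqrt D + 1) := by
        have := Nat.lt_succ_sqrt' D; rwa [pow_two] at this
      have hj0t : Nat.sqrt D ≤ Nat.sqrt t := Nat.sqrt_le_sqrt (by omega)
      have hj0self : Nat.sqrt D ≤ D := Nat.sqrt_le_self D
      have htself : Nat.sqrt t ≤ t := Nat.sqrt_le_self t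
      set j0 := Nat.sqrt D with hj0
      clear_value j0
      have hj0exp : (j0+1)*(j0+1) = j0*j0 + 2*j0 + 1 := by ring
      by_cases hB : D < j0 * j0 + j0
      · -- B1 : sides (t+1-j0, t+j0)
        have hj0pos : 1 ≤ j0 := by
          by_contra hc
          push_neg at hc
          interval_cases j0 <;> omega
        have hjq : j0 ≤ t - 1 := by
          rcases Nat.lt_or_ge j0 2 with h2 | h2
          · omega
          · have h3 : 2 * j0 ≤ j0 * j0 := Nat.mul_le_mul_right j0 h2
            omega
        have hprod : (t+1-j0) * (t+j0) + j0*j0 = t*t + t + j0 := by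
          zify [show j0 ≤ t+1 by omega]
          ring
        exact ⟨t+1-j0, t+j0, D + j0 - j0*j0, by omega, by omega, by omega, by omega,
          by omega, by omega⟩
      · -- B2 : sides (t-j0, t+1+j0)
        push_neg at hB
        have hjq : j0 + 1 ≤ t := by
          rcases Nat.lt_or_ge j0 1 with h1 | h1
          · omega
          · have h3 : 1 * j0 ≤ j0 * j0 := Nat.mul_le_mul_right j0 h1
            omega
        have hprod : (t-j0) * (t+1+j0) + (j0*j0 + j0) = t*t + t := by
          zify [show j0 ≤ t by omega]
          ring
        exact ⟨t-j0, t+1+j0, D - (j0*j0 + j0), by omega, by omega, by omega, by omega,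
          by omega, by omega⟩

/-- `s(n,e)`: the maximum spread over all simple graphs on `n` vertices with `e` edges. -/
noncomputable def spreadMaxNE (n e : ℕ) : ℝ :=
  ⨆ G : {G : SimpleGraph (Fin n) // G.edgeSet.ncard = e}, spread G.1

/-- `s_b(n,e)`: the maximum spread over all bipartite simple graphs on `n` vertices
with `e` edges (bipartite = 2-colorable). -/
noncomputable def spreadMaxBipNE (n e : ℕ) : ℝ :=
  ⨆ G : {G : SimpleGraph (Fin n) // G.edgeSet.ncard = e ∧ G.Colorable 2}, spread G.1

/-- Asymptotic bipartite spread bound: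
`s(n,e) − s_b(n,e) ≤ ((1 + 16 e^{−3/4})/e^{3/4}) s(n,e)` for `1 ≤ e ≤ ⌊n²/4⌋`. -/
theorem bipartite_spread_upper (n e : ℕ) (he1 : 1 ≤ e) (he2 : e ≤ n ^ 2 / 4) :
    spreadMaxNE n e - spreadMaxBipNE n e ≤
      ((1 + 16 * (e : ℝ) ^ (-(3 : ℝ) / 4)) / (e : ℝ) ^ ((3 : ℝ) / 4)) * spreadMaxNE n e := by
  classical
  have h4 : 4 * e ≤ n ^ 2 := by
    have h := Nat.div_mul_le_self (n^2) 4
    have : 4 * e ≤ 4 * (n^2/4) := by omega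
    omega
  obtain ⟨a, b, δ, ha, hb, hδb, habn, habe, hδ2⟩ := key_exists n e he1 h4
  set H := bipG n a b δ with hH
  have hab_e : a * b - δ = e := by omega
  have hHcard : H.edgeSet.ncard = e := by rw [hH, bipG_ncard ha hδb habn, hab_e]
  have hHcol : H.Colorable 2 := bipG_colorable
  have hn0 : 0 < n := by omega
  -- real abbreviations
  set E : ℝ := (e : ℝ) with hE
  have hEpos : (0:ℝ) < E := by rw [hE]; exact_mod_cast he1
  set M : ℝ := (a:ℝ) * b with hM
  have hMe : M = E + (δ:ℝ) := by
    rw [hM, hE, ← Nat.cast_mul, habe]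
    push_cast
    ring
  have hMpos : (0:ℝ) < M := by
    have : (0:ℝ) ≤ (δ:ℝ) := Nat.cast_nonneg _
    linarith
  set c : ℝ := (1 + 16 * E ^ (-(3 : ℝ) / 4)) / E ^ ((3 : ℝ) / 4) with hc
  have hcnn : 0 ≤ c := by
    rw [hc]
    have h1 : (0:ℝ) < E ^ ((3:ℝ)/4) := Real.rpow_pos_of_pos hEpos _
    have h2 : (0:ℝ) ≤ E ^ (-(3:ℝ)/4) := le_of_lt (Real.rpow_pos_of_pos hEpos _)
    positivity
  -- spread of H is at least 2E/√M
  have hspread : 2 * E / Real.sqrt M ≤ spread H := by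
    have h := spread_bipG_ge (n := n) ha hb hδb habn
    rw [hab_e] at h
    exact h
  -- sup bounds
  haveI hne1 : Nonempty {G : SimpleGraph (Fin n) // G.edgeSet.ncard = e} := ⟨⟨H, hHcard⟩⟩
  haveI hne2 : Nonempty {G : SimpleGraph (Fin n) // G.edgeSet.ncard = e ∧ G.Colorable 2} :=
    ⟨⟨H, hHcard, hHcol⟩⟩
  have hbdd1 : BddAbove (Set.range
      fun G : {G : SimpleGraph (Fin n) // G.edgeSet.ncard = e} => spread G.1) :=
    (Set.finite_range _).bddAbove
  have hbdd2 : BddAbove (Set.range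
      fun G : {G : SimpleGraph (Fin n) // G.edgeSet.ncard = e ∧ G.Colorable 2} => spread G.1) :=
    (Set.finite_range _).bddAbove
  have hNE_ge : 2 * E / Real.sqrt M ≤ spreadMaxNE n e :=
    le_trans hspread (le_ciSup hbdd1 ⟨H, hHcard⟩)
  have hB_ge : 2 * E / Real.sqrt M ≤ spreadMaxBipNE n e :=
    le_trans hspread (le_ciSup hbdd2 ⟨H, hHcard, hHcol⟩)
  have hNE_le : spreadMaxNE n e ≤ 2 * Real.sqrt E := by
    apply ciSup_le
    intro G
    exact spread_le_two_sqrt hn0 G.1 G.2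
  -- numeric core : δ ≤ 2 c E, hence √E √M ≤ (1+c) E
  have hq14 : ((Nat.sqrt (Nat.sqrt e) : ℕ) : ℝ) ≤ E ^ ((1:ℝ)/4) := by
    have s1 : ((Nat.sqrt (Nat.sqrt e) : ℕ) : ℝ) ≤ Real.sqrt (Nat.sqrt e) :=
      Real.nat_sqrt_le_real_sqrt
    have s2 : ((Nat.sqrt e : ℕ) : ℝ) ≤ Real.sqrt E := by
      rw [hE]; exact Real.nat_sqrt_le_real_sqrt
    have s3 : Real.sqrt ((Nat.sqrt e : ℕ) : ℝ) ≤ Real.sqrt (Real.sqrt E) :=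
      Real.sqrt_le_sqrt s2
    have s4 : Real.sqrt (Real.sqrt E) = E ^ ((1:ℝ)/4) := by
      rw [Real.sqrt_eq_rpow, Real.sqrt_eq_rpow, ← Real.rpow_mul (le_of_lt hEpos)]
      norm_num
    calc ((Nat.sqrt (Nat.sqrt e) : ℕ) : ℝ) ≤ Real.sqrt ((Nat.sqrt e : ℕ) : ℝ) := s1
      _ ≤ Real.sqrt (Real.sqrt E) := s3
      _ = E ^ ((1:ℝ)/4) := s4
  have hcE : E ^ ((1:ℝ)/4) ≤ c * E := by
    have key : c * E = (1 + 16 * E ^ (-(3 : ℝ) / 4)) * E ^ ((1:ℝ)/4) := by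
      rw [hc]
      rw [div_mul_eq_mul_div, mul_comm]
      rw [show ((1:ℝ)/4) = 1 - (3:ℝ)/4 by norm_num, Real.rpow_sub hEpos, Real.rpow_one]
      ring
    rw [key]
    have h1 : (0:ℝ) < E ^ ((1:ℝ)/4) := Real.rpow_pos_of_pos hEpos _
    have h2 : (0:ℝ) ≤ 16 * E ^ (-(3:ℝ)/4) := by
      have := Real.rpow_pos_of_pos hEpos (-(3:ℝ)/4); linarith
    nlinarith
  have hδcE : (δ : ℝ) ≤ 2 * (c * E) := by
    have h1 : (δ:ℝ) ≤ 2 * ((Nat.sqrt (Nat.sqrt e) : ℕ) : ℝ) := by exact_mod_cast hδ2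
    linarith
  have hEM : Real.sqrt E * Real.sqrt M ≤ (1 + c) * E := by
    rw [← Real.sqrt_mul (le_of_lt hEpos)]
    have hsq : E * M ≤ ((1 + c) * E)^2 := by
      rw [hMe]
      nlinarith
    calc Real.sqrt (E * M) ≤ Real.sqrt (((1+c)*E)^2) := Real.sqrt_le_sqrt hsq
      _ = (1+c)*E := Real.sqrt_sq (by nlinarith)
  have hSMpos : 0 < Real.sqrt M := Real.sqrt_pos.mpr hMpos
  have hkey : 2 * Real.sqrt E - 2 * E / Real.sqrt M ≤ c * (2 * E / Real.sqrt M) := by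
    have h1 : Real.sqrt E ≤ (1 + c) * (E / Real.sqrt M) := by
      rw [show (1+c) * (E / Real.sqrt M) = ((1+c)*E)/Real.sqrt M from by ring,
        le_div_iff₀ hSMpos]
      exact hEM
    have h2 : 2 * E / Real.sqrt M = 2 * (E / Real.sqrt M) := by ring
    rw [h2]
    linarith
  -- final chain
  have hfin : spreadMaxNE n e - spreadMaxBipNE n e ≤ c * (2 * E / Real.sqrt M) := by
    have := hB_ge
    linarith [hNE_le, hkey]
  calc spreadMaxNE n e - spreadMaxBipNE n e ≤ c * (2 * E / Real.sqrt M) := hfin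
    _ ≤ c * spreadMaxNE n e := by
        apply mul_le_mul_of_nonneg_left hNE_ge hcnn
end

section
/- Let n > 2 and let G be a simple graph on n vertices with s(G) = s(n). Let x be an entrywise-nonnegative unit eigenvector of the adjacency matrix A(G) for the eigenvalue λ₁(G) and let z be a unit eigenvector for λₙ(G). Then: (i) for all distinct vertices u, v, if x_u x_v − z_u z_v > 0 then uv ∈ E(G), and if x_u x_v − z_u z_v < 0 then uv ∉ E(G); (ii) for all distinct u, v, x_u x_v − z_u z_v ≠ 0 (so uv ∈ E(G) if and only if x_u x_v − z_u z_v > 0); (iii) setting P := {u : z_u ≥ 0} and N := V(G) ∖ P, every vertex of P is adjacent to every vertex of N, i.e., G is the join of the induced subgraphs G[P] and G[N]. -/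
open Matrix

variable {n : ℕ} {A : Matrix (Fin n) (Fin n) ℝ} (hA : A.IsHermitian)

noncomputable def Uu (hA : A.IsHermitian) : Matrix (Fin n) (Fin n) ℝ := hA.eigenvectorUnitary

lemma Uu_mul_star : Uu hA * star (Uu hA) = 1 :=
  (Matrix.mem_unitaryGroup_iff).mp hA.eigenvectorUnitary.2

lemma star_mul_Uu : star (Uu hA) * Uu hA = 1 :=
  (Matrix.mem_unitaryGroup_iff').mp hA.eigenvectorUnitary.2

lemma dot_Uu_mulVec (v y : Fin n → ℝ) :
    v ⬝ᵥ (Uu hA *ᵥ y) = (star (Uu hA) *ᵥ v) ⬝ᵥ y := by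
  rw [dotProduct_mulVec, star_eq_conjTranspose, conjTranspose_eq_transpose_of_trivial,
    mulVec_transpose]

lemma Uu_mulVec_star_mulVec (v : Fin n → ℝ) :
    Uu hA *ᵥ (star (Uu hA) *ᵥ v) = v := by
  rw [mulVec_mulVec, Uu_mul_star, one_mulVec]

lemma spec_mulVec (v : Fin n → ℝ) :
    A *ᵥ v = Uu hA *ᵥ (fun i => hA.eigenvalues i * (star (Uu hA) *ᵥ v) i) := by
  have h1 : A = Uu hA * diagonal hA.eigenvalues * star (Uu hA) := by
    have := hA.spectral_theorem
    simpa [Uu, Function.comp] using this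
  have key : ∀ (B : Matrix (Fin n) (Fin n) ℝ) (lam : Fin n → ℝ),
      (B * diagonal lam * star B) *ᵥ v = B *ᵥ (fun i => lam i * (star B *ᵥ v) i) := by
    intro B lam
    have hd : (diagonal lam *ᵥ (star B *ᵥ v)) = fun i => lam i * (star B *ᵥ v) i := by
      funext i; exact mulVec_diagonal _ _ _
    rw [← mulVec_mulVec, ← mulVec_mulVec, hd]
  exact (congrArg (· *ᵥ v) h1).trans (key _ _)

lemma sum_w_sq (v : Fin n → ℝ) :
    ∑ i, ((star (Uu hA) *ᵥ v) i)^2 = v ⬝ᵥ v := by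
  have h : (star (Uu hA) *ᵥ v) ⬝ᵥ (star (Uu hA) *ᵥ v) = v ⬝ᵥ v := by
    rw [← dot_Uu_mulVec, Uu_mulVec_star_mulVec]
  rw [← h]
  simp [dotProduct, sq]

lemma quadform_eq (v : Fin n → ℝ) :
    v ⬝ᵥ (A *ᵥ v) = ∑ i, hA.eigenvalues i * ((star (Uu hA) *ᵥ v) i)^2 := by
  rw [spec_mulVec hA, dot_Uu_mulVec]
  simp [dotProduct, sq]
  ring_nf
  exact Finset.sum_congr rfl fun i _ => by ring

lemma quad_le_sup (v : Fin n → ℝ) (hv : ∑ i, (v i)^2 = 1) :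
    v ⬝ᵥ (A *ᵥ v) ≤ ⨆ i, hA.eigenvalues i := by
  have hdot : v ⬝ᵥ v = 1 := by rw [dotProduct]; rw [← hv]; exact Finset.sum_congr rfl fun i _ => (sq (v i)).symm
  rw [quadform_eq hA v]
  calc ∑ i, hA.eigenvalues i * ((star (Uu hA) *ᵥ v) i)^2
      ≤ ∑ i, (⨆ j, hA.eigenvalues j) * ((star (Uu hA) *ᵥ v) i)^2 := by
        refine Finset.sum_le_sum fun i _ => ?_
        exact mul_le_mul_of_nonneg_right
          (le_ciSup (Set.Finite.bddAbove (Set.finite_range _)) i) (sq_nonneg _)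
    _ = (⨆ j, hA.eigenvalues j) * ∑ i, ((star (Uu hA) *ᵥ v) i)^2 := by rw [Finset.mul_sum]
    _ = (⨆ j, hA.eigenvalues j) := by rw [sum_w_sq hA v, hdot, mul_one]

lemma inf_le_quad (v : Fin n → ℝ) (hv : ∑ i, (v i)^2 = 1) :
    (⨅ i, hA.eigenvalues i) ≤ v ⬝ᵥ (A *ᵥ v) := by
  have hdot : v ⬝ᵥ v = 1 := by rw [dotProduct]; rw [← hv]; exact Finset.sum_congr rfl fun i _ => (sq (v i)).symm
  rw [quadform_eq hA v]
  calc (⨅ j, hA.eigenvalues j)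
      = (⨅ j, hA.eigenvalues j) * ∑ i, ((star (Uu hA) *ᵥ v) i)^2 := by rw [sum_w_sq hA v, hdot, mul_one]
    _ = ∑ i, (⨅ j, hA.eigenvalues j) * ((star (Uu hA) *ᵥ v) i)^2 := by rw [Finset.mul_sum]
    _ ≤ ∑ i, hA.eigenvalues i * ((star (Uu hA) *ᵥ v) i)^2 := by
        refine Finset.sum_le_sum fun i _ => ?_
        exact mul_le_mul_of_nonneg_right
          (ciInf_le (Set.Finite.bddBelow (Set.finite_range _)) i) (sq_nonneg _)

lemma eigvec_of_quad_eq_sup (v : Fin n → ℝ) (hv : ∑ i, (v i)^2 = 1)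
    (heq : v ⬝ᵥ (A *ᵥ v) = ⨆ i, hA.eigenvalues i) :
    A *ᵥ v = (⨆ i, hA.eigenvalues i) • v := by
  set M := ⨆ i, hA.eigenvalues i with hM
  set w := star (Uu hA) *ᵥ v with hw
  have hdot : v ⬝ᵥ v = 1 := by rw [dotProduct]; rw [← hv]; exact Finset.sum_congr rfl fun i _ => (sq (v i)).symm
  have hws : ∑ i, (w i)^2 = 1 := by rw [hw, sum_w_sq hA v, hdot]
  have h0 : ∑ i, (M - hA.eigenvalues i) * (w i)^2 = 0 := by
    have := quadform_eq hA v
    rw [heq] at this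
    have : ∑ i, hA.eigenvalues i * (w i)^2 = M := this.symm
    calc ∑ i, (M - hA.eigenvalues i) * (w i)^2
        = M * ∑ i, (w i)^2 - ∑ i, hA.eigenvalues i * (w i)^2 := by
          rw [Finset.mul_sum, ← Finset.sum_sub_distrib]
          exact Finset.sum_congr rfl fun i _ => by ring
      _ = 0 := by rw [hws, this, mul_one, sub_self]
  have hterm : ∀ i ∈ Finset.univ, (M - hA.eigenvalues i) * (w i)^2 = 0 :=
    (Finset.sum_eq_zero_iff_of_nonneg (fun i _ =>
      mul_nonneg (sub_nonneg.2 (le_ciSup (Set.Finite.bddAbove (Set.finite_range _)) i))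
        (sq_nonneg _))).1 h0
  have hlam : ∀ i, hA.eigenvalues i * w i = M * w i := by
    intro i
    rcases mul_eq_zero.1 (hterm i (Finset.mem_univ i)) with h | h
    · rw [sub_eq_zero.1 h]
    · rw [pow_eq_zero_iff (by norm_num)] at h
      rw [h, mul_zero, mul_zero]
  calc A *ᵥ v = Uu hA *ᵥ (fun i => hA.eigenvalues i * w i) := spec_mulVec hA v
    _ = Uu hA *ᵥ (M • w) := congrArg (Uu hA *ᵥ ·)
        (funext fun i => (hlam i).trans rfl)
    _ = M • (Uu hA *ᵥ w) := mulVec_smul _ _ _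
    _ = M • v := by rw [hw, Uu_mulVec_star_mulVec]

lemma eigvec_of_quad_eq_inf (v : Fin n → ℝ) (hv : ∑ i, (v i)^2 = 1)
    (heq : v ⬝ᵥ (A *ᵥ v) = ⨅ i, hA.eigenvalues i) :
    A *ᵥ v = (⨅ i, hA.eigenvalues i) • v := by
  set M := ⨅ i, hA.eigenvalues i with hM
  set w := star (Uu hA) *ᵥ v with hw
  have hdot : v ⬝ᵥ v = 1 := by rw [dotProduct]; rw [← hv]; exact Finset.sum_congr rfl fun i _ => (sq (v i)).symm
  have hws : ∑ i, (w i)^2 = 1 := by rw [hw, sum_w_sq hA v, hdot]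
  have h0 : ∑ i, (hA.eigenvalues i - M) * (w i)^2 = 0 := by
    have := quadform_eq hA v
    rw [heq] at this
    have : ∑ i, hA.eigenvalues i * (w i)^2 = M := this.symm
    calc ∑ i, (hA.eigenvalues i - M) * (w i)^2
        = ∑ i, hA.eigenvalues i * (w i)^2 - M * ∑ i, (w i)^2 := by
          rw [Finset.mul_sum, ← Finset.sum_sub_distrib]
          exact Finset.sum_congr rfl fun i _ => by ring
      _ = 0 := by rw [hws, this, mul_one, sub_self]
  have hterm : ∀ i ∈ Finset.univ, (hA.eigenvalues i - M) * (w i)^2 = 0 :=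
    (Finset.sum_eq_zero_iff_of_nonneg (fun i _ =>
      mul_nonneg (sub_nonneg.2 (ciInf_le (Set.Finite.bddBelow (Set.finite_range _)) i))
        (sq_nonneg _))).1 h0
  have hlam : ∀ i, hA.eigenvalues i * w i = M * w i := by
    intro i
    rcases mul_eq_zero.1 (hterm i (Finset.mem_univ i)) with h | h
    · rw [← sub_eq_zero.1 h]
    · rw [pow_eq_zero_iff (by norm_num)] at h
      rw [h, mul_zero, mul_zero]
  calc A *ᵥ v = Uu hA *ᵥ (fun i => hA.eigenvalues i * w i) := spec_mulVec hA v
    _ = Uu hA *ᵥ (M • w) := congrArg (Uu hA *ᵥ ·)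
        (funext fun i => (hlam i).trans rfl)
    _ = M • (Uu hA *ᵥ w) := mulVec_smul _ _ _
    _ = M • v := by rw [hw, Uu_mulVec_star_mulVec]

section Graphs
open scoped Classical

variable {n : ℕ}

lemma dot_self_eq (v : Fin n → ℝ) : v ⬝ᵥ v = ∑ i, v i ^ 2 := by
  rw [dotProduct]; exact Finset.sum_congr rfl fun i _ => (sq (v i)).symm

/-- toggle the pair u,v (when u ≠ v) -/
def toggleG (G : SimpleGraph (Fin n)) (u v : Fin n) : SimpleGraph (Fin n) where
  Adj a b := Xor' (G.Adj a b) (u ≠ v ∧ ((a = u ∧ b = v) ∨ (a = v ∧ b = u)))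
  symm.symm a b h := by
    have := G.adj_comm a b
    unfold Xor' Xor at *
    tauto
  loopless.irrefl a h := by
    rcases h with ⟨hadj, _⟩ | ⟨⟨hne, hor⟩, _⟩
    · exact G.loopless.irrefl a hadj
    · rcases hor with ⟨h1, h2⟩ | ⟨h1, h2⟩
      · exact hne (h1.symm.trans h2)
      · exact hne (h2.symm.trans h1)

/-- join vertex u to everything else -/
def joinAll (G : SimpleGraph (Fin n)) (u : Fin n) : SimpleGraph (Fin n) where
  Adj a b := (G.Adj a b ∨ a = u ∨ b = u) ∧ a ≠ b
  symm.symm a b h := by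
    have := G.adj_comm a b
    constructor
    · tauto
    · exact fun hh => h.2 hh.symm
  loopless.irrefl a h := by simp at h

lemma quad_pert (M : Matrix (Fin n) (Fin n) ℝ) (u v : Fin n) (ε : ℝ) (v0 : Fin n → ℝ) :
    v0 ⬝ᵥ ((M + single u v ε + single v u ε) *ᵥ v0)
      = v0 ⬝ᵥ (M *ᵥ v0) + 2 * ε * (v0 u * v0 v) := by
  have hupd : ∀ (i : Fin n) (y : ℝ), v0 ⬝ᵥ Function.update (0 : Fin n → ℝ) i y = v0 i * y := by
    intro i y
    simp [dotProduct, Function.update_apply, Finset.sum_ite_eq']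
  rw [add_mulVec, add_mulVec, dotProduct_add, dotProduct_add,
    single_mulVec, single_mulVec, hupd, hupd]
  ring

lemma adjMat_toggle (G : SimpleGraph (Fin n)) {u v : Fin n} (huv : u ≠ v) :
    adjMat (toggleG G u v) = adjMat G
      + single u v (if G.Adj u v then (-1:ℝ) else 1)
      + single v u (if G.Adj u v then (-1:ℝ) else 1) := by
  ext a b
  simp only [adjMat, toggleG, Matrix.add_apply, Matrix.single, Matrix.of_apply]
  by_cases h1 : u = a ∧ v = b
  · rw [← h1.1, ← h1.2]
    rw [if_pos (⟨rfl, rfl⟩ : u = u ∧ v = v), if_neg (fun hh : v = u ∧ u = v => huv hh.2)]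
    have hc : u ≠ v ∧ ((u = u ∧ v = v) ∨ (u = v ∧ v = u)) := ⟨huv, Or.inl ⟨rfl, rfl⟩⟩
    by_cases hadj : G.Adj u v
    · have hx : ¬ Xor' (G.Adj u v) (u ≠ v ∧ ((u = u ∧ v = v) ∨ (u = v ∧ v = u))) :=
        fun hh => hh.elim (fun p => p.2 hc) (fun p => p.2 hadj)
      erw [if_neg hx, if_pos hadj, if_pos hadj]
      norm_num
    · have hx : Xor' (G.Adj u v) (u ≠ v ∧ ((u = u ∧ v = v) ∨ (u = v ∧ v = u))) :=
        Or.inr ⟨hc, hadj⟩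
      erw [if_pos hx, if_neg hadj, if_neg hadj]
      norm_num
  · by_cases h2 : v = a ∧ u = b
    · rw [← h2.1, ← h2.2]
      rw [if_neg (fun hh : u = v ∧ v = u => huv hh.1), if_pos (⟨rfl, rfl⟩ : v = v ∧ u = u)]
      have hc : u ≠ v ∧ ((v = u ∧ u = v) ∨ (v = v ∧ u = u)) := ⟨huv, Or.inr ⟨rfl, rfl⟩⟩
      have hsym : G.Adj v u ↔ G.Adj u v := G.adj_comm v u
      by_cases hadj : G.Adj u v
      · have hadj' : G.Adj v u := hsym.2 hadj
        have hx : ¬ Xor' (G.Adj v u) (u ≠ v ∧ ((v = u ∧ u = v) ∨ (v = v ∧ u = u))) :=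
          fun hh => hh.elim (fun p => p.2 hc) (fun p => p.2 hadj')
        erw [if_neg hx, if_pos hadj', if_pos hadj]
        norm_num
      · have hadj' : ¬ G.Adj v u := fun hh => hadj (hsym.1 hh)
        have hx : Xor' (G.Adj v u) (u ≠ v ∧ ((v = u ∧ u = v) ∨ (v = v ∧ u = u))) :=
          Or.inr ⟨hc, hadj'⟩
        erw [if_pos hx, if_neg hadj', if_neg hadj]
        norm_num
    · rw [if_neg (fun hh : u = a ∧ v = b => h1 hh), if_neg (fun hh : v = a ∧ u = b => h2 hh)]
      have hc : ¬ (u ≠ v ∧ ((a = u ∧ b = v) ∨ (a = v ∧ b = u))) := by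
        rintro ⟨-, ⟨ha, hb⟩ | ⟨ha, hb⟩⟩
        · exact h1 ⟨ha.symm, hb.symm⟩
        · exact h2 ⟨ha.symm, hb.symm⟩
      have hx : Xor' (G.Adj a b) (u ≠ v ∧ ((a = u ∧ b = v) ∨ (a = v ∧ b = u))) ↔ G.Adj a b :=
        ⟨fun hh => hh.elim (fun p => p.1) (fun p => absurd p.1 hc),
         fun hh => Or.inl ⟨hh, hc⟩⟩
      by_cases hadj : G.Adj a b
      · erw [if_pos (hx.2 hadj), if_pos hadj]; ring
      · erw [if_neg (fun hh => hadj (hx.1 hh)), if_neg hadj]; ring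

lemma quaddiff_expand (M : Matrix (Fin n) (Fin n) ℝ) (x z : Fin n → ℝ) :
    x ⬝ᵥ (M *ᵥ x) - z ⬝ᵥ (M *ᵥ z) = ∑ a, ∑ b, M a b * (x a * x b - z a * z b) := by
  simp only [dotProduct, mulVec, Finset.mul_sum, ← Finset.sum_sub_distrib]
  exact Finset.sum_congr rfl fun a _ => Finset.sum_congr rfl fun b _ => by ring

lemma quaddiff_le_spread (H : SimpleGraph (Fin n)) (x0 z0 : Fin n → ℝ)
    (hx0 : ∑ i, x0 i ^ 2 = 1) (hz0 : ∑ i, z0 i ^ 2 = 1) :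
    x0 ⬝ᵥ (adjMat H *ᵥ x0) - z0 ⬝ᵥ (adjMat H *ᵥ z0) ≤ spread H := by
  have h1 := quad_le_sup (adjMat_isHermitian H) x0 hx0
  have h2 := inf_le_quad (adjMat_isHermitian H) z0 hz0
  unfold spread lamMax lamMin graphEigs
  linarith

lemma sum_two (p0 p1 : Fin n) (h : p0 ≠ p1) (A B : ℝ) :
    ∑ a, (if a = p0 then A else if a = p1 then B else 0) = A + B := by
  have hh : ∀ a : Fin n, (if a = p0 then A else if a = p1 then B else 0)
      = (if a = p0 then A else 0) + (if a = p1 then B else 0) := by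
    intro a
    by_cases h0 : a = p0 <;> by_cases h1 : a = p1 <;> simp_all
  simp only [hh, Finset.sum_add_distrib, Finset.sum_ite_eq']
  simp

lemma join_quad_eq (G : SimpleGraph (Fin n)) (u : Fin n) (w : Fin n → ℝ) (hw : w u = 0) :
    w ⬝ᵥ (adjMat (joinAll G u) *ᵥ w) = w ⬝ᵥ (adjMat G *ᵥ w) := by
  simp only [dotProduct, mulVec, Finset.mul_sum, adjMat]
  refine Finset.sum_congr rfl fun a _ => Finset.sum_congr rfl fun b _ => ?_
  by_cases hau : a = u
  · rw [hau, hw]; ring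
  · by_cases hbu : b = u
    · rw [hbu, hw]; ring
    · have hiff : (joinAll G u).Adj a b ↔ G.Adj a b := by
        constructor
        · rintro ⟨h | h | h, -⟩
          · exact h
          · exact absurd h hau
          · exact absurd h hbu
        · exact fun h => ⟨Or.inl h, G.ne_of_adj h⟩
      rw [if_congr hiff rfl rfl]

lemma join_row_u (G : SimpleGraph (Fin n)) (u : Fin n) (w : Fin n → ℝ) :
    (adjMat (joinAll G u) *ᵥ w) u = ∑ b, (if b = u then 0 else w b) := by
  simp only [mulVec, dotProduct, adjMat]
  refine Finset.sum_congr rfl fun b _ => ?_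
  by_cases hbu : b = u
  · rw [hbu, if_pos rfl]
    rw [if_neg ((joinAll G u).loopless.irrefl u)]
    ring
  · have hadj : (joinAll G u).Adj u b := ⟨Or.inr (Or.inl rfl), fun hh => hbu hh.symm⟩
    rw [if_pos hadj, if_neg hbu, one_mul]

lemma adjMat_bot : adjMat (⊥ : SimpleGraph (Fin n)) = 0 := by
  ext a b
  simp [adjMat]

lemma two_le_spread_max (hn : 2 < n) (G : SimpleGraph (Fin n))
    (hmax : ∀ H : SimpleGraph (Fin n), spread H ≤ spread G) : (2:ℝ) ≤ spread G := by
  have h0 : (0:ℕ) < n := by omega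
  have h1 : (1:ℕ) < n := by omega
  set p0 : Fin n := ⟨0, h0⟩
  set p1 : Fin n := ⟨1, h1⟩
  have hp : p0 ≠ p1 := by
    intro h
    have := congrArg Fin.val h
    simp [p0, p1] at this
  set s : ℝ := (Real.sqrt 2)⁻¹ with hs
  have hs2 : s ^ 2 = 1/2 := by
    rw [hs, inv_pow, Real.sq_sqrt (by norm_num : (0:ℝ) ≤ 2)]
    norm_num
  have hss : s * s = 1/2 := by rw [← sq, hs2]
  set x0 : Fin n → ℝ := fun a => if a = p0 then s else if a = p1 then s else 0 with hx0
  set z0 : Fin n → ℝ := fun a => if a = p0 then s else if a = p1 then -s else 0 with hz0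
  have hx0unit : ∑ i, x0 i ^ 2 = 1 := by
    have hpt : ∀ a, x0 a ^ 2 = (if a = p0 then s^2 else if a = p1 then s^2 else 0) := by
      intro a
      by_cases ha0 : a = p0 <;> by_cases ha1 : a = p1 <;> simp [hx0, ha0, ha1]
    rw [Finset.sum_congr rfl (fun a _ => hpt a), sum_two p0 p1 hp, hs2]
    norm_num
  have hz0unit : ∑ i, z0 i ^ 2 = 1 := by
    have hpt : ∀ a, z0 a ^ 2 = (if a = p0 then s^2 else if a = p1 then s^2 else 0) := by
      intro a
      by_cases ha0 : a = p0 <;> by_cases ha1 : a = p1 <;> simp [hz0, ha0, ha1]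
    rw [Finset.sum_congr rfl (fun a _ => hpt a), sum_two p0 p1 hp, hs2]
    norm_num
  have hbotadj : ¬ (⊥ : SimpleGraph (Fin n)).Adj p0 p1 := by simp
  have hAH : adjMat (toggleG (⊥ : SimpleGraph (Fin n)) p0 p1)
      = adjMat (⊥ : SimpleGraph (Fin n)) + single p0 p1 (1:ℝ)
        + single p1 p0 (1:ℝ) := by
    have h := adjMat_toggle (⊥ : SimpleGraph (Fin n)) hp
    rwa [if_neg hbotadj] at h
  have hx0p0 : x0 p0 = s := by simp [hx0]
  have hx0p1 : x0 p1 = s := by simp [hx0, Ne.symm hp]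
  have hz0p0 : z0 p0 = s := by simp [hz0]
  have hz0p1 : z0 p1 = -s := by simp [hz0, Ne.symm hp]
  have hqx : x0 ⬝ᵥ (adjMat (toggleG (⊥ : SimpleGraph (Fin n)) p0 p1) *ᵥ x0) = 1 := by
    rw [hAH, quad_pert, adjMat_bot, Matrix.zero_mulVec, dotProduct_zero, hx0p0, hx0p1]
    rw [hss]; ring
  have hqz : z0 ⬝ᵥ (adjMat (toggleG (⊥ : SimpleGraph (Fin n)) p0 p1) *ᵥ z0) = -1 := by
    rw [hAH, quad_pert, adjMat_bot, Matrix.zero_mulVec, dotProduct_zero, hz0p0, hz0p1]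
    nlinarith [hss]
  have h := quaddiff_le_spread (toggleG (⊥ : SimpleGraph (Fin n)) p0 p1) x0 z0 hx0unit hz0unit
  rw [hqx, hqz] at h
  have h2 := hmax (toggleG (⊥ : SimpleGraph (Fin n)) p0 p1)
  linarith

end Graphs


/-- Structure of spread-extremal graphs: edges are determined by the sign of
`x_u x_v − z_u z_v`, this quantity is never zero on distinct pairs, and every
vertex with `z_u ≥ 0` is adjacent to every vertex with `z_v < 0` (so `G` is
the join of the induced subgraphs on `P = {z ≥ 0}` and `N = {z < 0}`). -/
theorem spread_extremal_structure {n : ℕ} (hn : 2 < n) (G : SimpleGraph (Fin n))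
    (hmax : ∀ H : SimpleGraph (Fin n), spread H ≤ spread G)
    (x z : Fin n → ℝ)
    (hxnonneg : ∀ u, 0 ≤ x u)
    (hxunit : ∑ u, x u ^ 2 = 1) (hzunit : ∑ u, z u ^ 2 = 1)
    (hxeig : (adjMat G).mulVec x = lamMax G • x)
    (hzeig : (adjMat G).mulVec z = lamMin G • z) :
    (∀ u v : Fin n, u ≠ v →
      (0 < x u * x v - z u * z v → G.Adj u v) ∧
      (x u * x v - z u * z v < 0 → ¬ G.Adj u v)) ∧
    (∀ u v : Fin n, u ≠ v → x u * x v - z u * z v ≠ 0) ∧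
    (∀ u v : Fin n, 0 ≤ z u → z v < 0 → G.Adj u v) := by
  classical
  have hxdot : x ⬝ᵥ x = 1 := by rw [dot_self_eq, hxunit]
  have hzdot : z ⬝ᵥ z = 1 := by rw [dot_self_eq, hzunit]
  have hqx : x ⬝ᵥ (adjMat G *ᵥ x) = lamMax G := by
    rw [hxeig, dotProduct_smul, smul_eq_mul, hxdot, mul_one]
  have hqz : z ⬝ᵥ (adjMat G *ᵥ z) = lamMin G := by
    rw [hzeig, dotProduct_smul, smul_eq_mul, hzdot, mul_one]
  have hQG : x ⬝ᵥ (adjMat G *ᵥ x) - z ⬝ᵥ (adjMat G *ᵥ z) = spread G := by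
    rw [hqx, hqz]; rfl
  have htogx : ∀ u v : Fin n, u ≠ v →
      x ⬝ᵥ (adjMat (toggleG G u v) *ᵥ x)
        = lamMax G + 2 * (if G.Adj u v then (-1:ℝ) else 1) * (x u * x v) := by
    intro u v huv
    rw [adjMat_toggle G huv, quad_pert, hqx]
  have htogz : ∀ u v : Fin n, u ≠ v →
      z ⬝ᵥ (adjMat (toggleG G u v) *ᵥ z)
        = lamMin G + 2 * (if G.Adj u v then (-1:ℝ) else 1) * (z u * z v) := by
    intro u v huv
    rw [adjMat_toggle G huv, quad_pert, hqz]
  have hP1 : ∀ u v : Fin n, u ≠ v →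
      2 * (if G.Adj u v then (-1:ℝ) else 1) * (x u * x v - z u * z v) ≤ 0 := by
    intro u v huv
    have h := quaddiff_le_spread (toggleG G u v) x z hxunit hzunit
    have h2 := hmax (toggleG G u v)
    rw [htogx u v huv, htogz u v huv] at h
    have h3 := h.trans h2
    have h4 : spread G = lamMax G - lamMin G := rfl
    rw [h4] at h3
    nlinarith [h3]
  have part1 : ∀ u v : Fin n, u ≠ v →
      (0 < x u * x v - z u * z v → G.Adj u v) ∧
      (x u * x v - z u * z v < 0 → ¬ G.Adj u v) := by
    intro u v huv
    have h := hP1 u v huv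
    constructor
    · intro hpos
      by_contra hadj
      rw [if_neg hadj] at h
      nlinarith
    · intro hneg hadj
      rw [if_pos hadj] at h
      nlinarith
  have h2spread : (2:ℝ) ≤ spread G := two_le_spread_max hn G hmax
  have part2 : ∀ u v : Fin n, u ≠ v → x u * x v - z u * z v ≠ 0 := by
    intro u v huv hf0
    set ε : ℝ := if G.Adj u v then (-1:ℝ) else 1 with hεdef
    have hεne : ε ≠ 0 := by rw [hεdef]; split_ifs <;> norm_num
    set c : ℝ := x u * x v with hcdef
    have hcz : z u * z v = c := by rw [hcdef]; linarith
    have hqxH : x ⬝ᵥ (adjMat (toggleG G u v) *ᵥ x) = lamMax G + 2 * ε * c :=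
      htogx u v huv
    have hqzH : z ⬝ᵥ (adjMat (toggleG G u v) *ᵥ z) = lamMin G + 2 * ε * c := by
      rw [htogz u v huv, hcz]
    have hle1 : x ⬝ᵥ (adjMat (toggleG G u v) *ᵥ x) ≤ lamMax (toggleG G u v) :=
      quad_le_sup (adjMat_isHermitian (toggleG G u v)) x hxunit
    have hle2 : lamMin (toggleG G u v) ≤ z ⬝ᵥ (adjMat (toggleG G u v) *ᵥ z) :=
      inf_le_quad (adjMat_isHermitian (toggleG G u v)) z hzunit
    have hsH : spread (toggleG G u v) ≤ spread G := hmax (toggleG G u v)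
    have hs1 : spread (toggleG G u v) = lamMax (toggleG G u v) - lamMin (toggleG G u v) := rfl
    have hs2 : spread G = lamMax G - lamMin G := rfl
    rw [hs1, hs2] at hsH
    have heqx : x ⬝ᵥ (adjMat (toggleG G u v) *ᵥ x) = lamMax (toggleG G u v) :=
      le_antisymm hle1 (by linarith)
    have heqz : z ⬝ᵥ (adjMat (toggleG G u v) *ᵥ z) = lamMin (toggleG G u v) :=
      le_antisymm (by linarith) hle2
    have hxH : adjMat (toggleG G u v) *ᵥ x = lamMax (toggleG G u v) • x :=
      eigvec_of_quad_eq_sup (adjMat_isHermitian (toggleG G u v)) x hxunit heqx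
    have hzH : adjMat (toggleG G u v) *ᵥ z = lamMin (toggleG G u v) • z :=
      eigvec_of_quad_eq_inf (adjMat_isHermitian (toggleG G u v)) z hzunit heqz
    have hMH : lamMax (toggleG G u v) = lamMax G + 2 * ε * c := by rw [← heqx, hqxH]
    have hmH : lamMin (toggleG G u v) = lamMin G + 2 * ε * c := by rw [← heqz, hqzH]
    have hsumx : adjMat (toggleG G u v) *ᵥ x
        = adjMat G *ᵥ x + Function.update (0 : Fin n → ℝ) u (ε * x v)
          + Function.update (0 : Fin n → ℝ) v (ε * x u) := by
      rw [adjMat_toggle G huv, add_mulVec, add_mulVec, single_mulVec,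
        single_mulVec]
    have hsumz : adjMat (toggleG G u v) *ᵥ z
        = adjMat G *ᵥ z + Function.update (0 : Fin n → ℝ) u (ε * z v)
          + Function.update (0 : Fin n → ℝ) v (ε * z u) := by
      rw [adjMat_toggle G huv, add_mulVec, add_mulVec, single_mulVec,
        single_mulVec]
    have hcoordx : ∀ a : Fin n, 2 * ε * c * x a
        = (if a = u then ε * x v else 0) + (if a = v then ε * x u else 0) := by
      intro a
      have h1 := congrFun (hxH.symm.trans hsumx) a
      simp only [Pi.add_apply, Pi.smul_apply, smul_eq_mul, Function.update_apply,
        Pi.zero_apply] at h1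
      have h2 := congrFun hxeig a
      simp only [Pi.smul_apply, smul_eq_mul] at h2
      rw [h2, hMH] at h1
      linarith
    have hcoordz : ∀ a : Fin n, 2 * ε * c * z a
        = (if a = u then ε * z v else 0) + (if a = v then ε * z u else 0) := by
      intro a
      have h1 := congrFun (hzH.symm.trans hsumz) a
      simp only [Pi.add_apply, Pi.smul_apply, smul_eq_mul, Function.update_apply,
        Pi.zero_apply] at h1
      have h2 := congrFun hzeig a
      simp only [Pi.smul_apply, smul_eq_mul] at h2
      rw [h2, hmH] at h1
      linarith
    by_cases hc0 : c = 0
    · -- x and z vanish at u and v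
      have hxv : x v = 0 := by
        have h := hcoordx u
        rw [if_pos rfl, if_neg huv, hc0] at h
        have : ε * x v = 0 := by linarith
        exact (mul_eq_zero.mp this).resolve_left hεne
      have hxu : x u = 0 := by
        have h := hcoordx v
        rw [if_neg (Ne.symm huv), if_pos rfl, hc0] at h
        have : ε * x u = 0 := by linarith
        exact (mul_eq_zero.mp this).resolve_left hεne
      have hzv : z v = 0 := by
        have h := hcoordz u
        rw [if_pos rfl, if_neg huv, hc0] at h
        have : ε * z v = 0 := by linarith
        exact (mul_eq_zero.mp this).resolve_left hεne
      have hzu : z u = 0 := by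
        have h := hcoordz v
        rw [if_neg (Ne.symm huv), if_pos rfl, hc0] at h
        have : ε * z u = 0 := by linarith
        exact (mul_eq_zero.mp this).resolve_left hεne
      -- join u to everything
      have hjx : x ⬝ᵥ (adjMat (joinAll G u) *ᵥ x) = lamMax G := by
        rw [join_quad_eq G u x hxu, hqx]
      have hjz : z ⬝ᵥ (adjMat (joinAll G u) *ᵥ z) = lamMin G := by
        rw [join_quad_eq G u z hzu, hqz]
      have hle1' : x ⬝ᵥ (adjMat (joinAll G u) *ᵥ x) ≤ lamMax (joinAll G u) :=
        quad_le_sup (adjMat_isHermitian (joinAll G u)) x hxunit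
      have hle2' : lamMin (joinAll G u) ≤ z ⬝ᵥ (adjMat (joinAll G u) *ᵥ z) :=
        inf_le_quad (adjMat_isHermitian (joinAll G u)) z hzunit
      have hsH' : spread (joinAll G u) ≤ spread G := hmax (joinAll G u)
      have hs1' : spread (joinAll G u) = lamMax (joinAll G u) - lamMin (joinAll G u) := rfl
      have hs2' : spread G = lamMax G - lamMin G := rfl
      rw [hs1', hs2'] at hsH'
      have heqx' : x ⬝ᵥ (adjMat (joinAll G u) *ᵥ x) = lamMax (joinAll G u) :=
        le_antisymm hle1' (by linarith)
      have hXj : adjMat (joinAll G u) *ᵥ x = lamMax (joinAll G u) • x :=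
        eigvec_of_quad_eq_sup (adjMat_isHermitian (joinAll G u)) x hxunit heqx'
      have hMj : lamMax (joinAll G u) = lamMax G := by rw [← heqx', hjx]
      have hrow := congrFun hXj u
      rw [join_row_u G u x] at hrow
      simp only [Pi.smul_apply, smul_eq_mul] at hrow
      rw [hxu, mul_zero] at hrow
      -- hrow : ∑ b, (if b = u then 0 else x b) = 0
      have hall : ∀ b : Fin n, (if b = u then 0 else x b) = 0 := by
        have hnn : ∀ b ∈ Finset.univ, (0:ℝ) ≤ (if b = u then 0 else x b) := by
          intro b _
          by_cases hb : b = u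
          · simp [hb]
          · simpa [hb] using hxnonneg b
        intro b
        exact (Finset.sum_eq_zero_iff_of_nonneg hnn).mp hrow b (Finset.mem_univ b)
      have hxall : ∀ b : Fin n, x b = 0 := by
        intro b
        by_cases hb : b = u
        · rw [hb]; exact hxu
        · have := hall b; rwa [if_neg hb] at this
      have : (1:ℝ) = 0 := by
        rw [← hxunit]
        apply Finset.sum_eq_zero
        intro b _
        rw [hxall b]
        ring
      norm_num at this
    · -- c ≠ 0 : x and z vanish off {u, v}
      have hxa : ∀ a : Fin n, a ≠ u → a ≠ v → x a = 0 := by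
        intro a hau hav
        have h := hcoordx a
        rw [if_neg hau, if_neg hav] at h
        have h2 : (2 * ε * c) * x a = 0 := by linarith
        rcases mul_eq_zero.mp h2 with h3 | h3
        · exfalso
          rcases mul_eq_zero.mp h3 with h4 | h4
          · rcases mul_eq_zero.mp h4 with h5 | h5
            · norm_num at h5
            · exact hεne h5
          · exact hc0 h4
        · exact h3
      have hza : ∀ a : Fin n, a ≠ u → a ≠ v → z a = 0 := by
        intro a hau hav
        have h := hcoordz a
        rw [if_neg hau, if_neg hav] at h
        have h2 : (2 * ε * c) * z a = 0 := by linarith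
        rcases mul_eq_zero.mp h2 with h3 | h3
        · exfalso
          rcases mul_eq_zero.mp h3 with h4 | h4
          · rcases mul_eq_zero.mp h4 with h5 | h5
            · norm_num at h5
            · exact hεne h5
          · exact hc0 h4
        · exact h3
      have hzero : spread G = 0 := by
        rw [← hQG, quaddiff_expand]
        apply Finset.sum_eq_zero
        intro a _
        apply Finset.sum_eq_zero
        intro b _
        by_cases hab : a = b
        · have : adjMat G a b = 0 := by
            rw [hab]
            simp [adjMat]
          rw [this, zero_mul]
        · by_cases hau : a = u
          · by_cases hbv : b = v
            · rw [hau, hbv]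
              have : x u * x v - z u * z v = 0 := hf0
              rw [this, mul_zero]
            · have hbu : b ≠ u := by rw [hau] at hab; exact fun hh => hab hh.symm
              rw [hza b hbu hbv, hxa b hbu hbv]
              ring_nf
          · by_cases hav : a = v
            · by_cases hbu : b = u
              · rw [hav, hbu]
                have : x v * x u - z v * z u = 0 := by
                  have := hf0; nlinarith [hf0]
                rw [this, mul_zero]
              · have hbv : b ≠ v := by rw [hav] at hab; exact fun hh => hab hh.symm
                rw [hza b hbu hbv, hxa b hbu hbv]
                ring_nf
            · rw [hza a hau hav, hxa a hau hav]
              ring_nf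
      linarith
  refine ⟨part1, part2, ?_⟩
  intro u v hzu hzv
  have huv : u ≠ v := by
    intro h
    rw [h] at hzu
    linarith
  have hx : 0 ≤ x u * x v := mul_nonneg (hxnonneg u) (hxnonneg v)
  have hz : z u * z v ≤ 0 := mul_nonpos_of_nonneg_of_nonpos hzu hzv.le
  have hfpos : 0 < x u * x v - z u * z v :=
    lt_of_le_of_ne (by linarith) (Ne.symm (part2 u v huv))
  exact (part1 u v huv).1 hfpos
end

section
/- There exist a constant c > 0 and N ∈ ℕ such that for all n ≥ N the following holds: if G is a simple graph on n vertices with s(G) = s(n) and z is a unit eigenvector of the adjacency matrix of G for the smallest eigenvalue λₙ(G), then |{u ∈ V(G) : z_u ≥ 0}| ≥ c·n and |{u ∈ V(G) : z_u < 0}| ≥ c·n. -/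
/-! ### Auxiliary lemmas -/

open Matrix
open scoped Classical

section Rayleigh

lemma quadform_spectral {n : ℕ} {A : Matrix (Fin n) (Fin n) ℝ} (hA : A.IsHermitian) (x : Fin n → ℝ) :
    x ⬝ᵥ (A *ᵥ x) = ∑ i, hA.eigenvalues i * ((star (hA.eigenvectorUnitary : Matrix (Fin n) (Fin n) ℝ)) *ᵥ x) i ^2 := by
  set U : Matrix (Fin n) (Fin n) ℝ := (hA.eigenvectorUnitary : Matrix (Fin n) (Fin n) ℝ) with hU
  set w : Fin n → ℝ := (star U) *ᵥ x with hw
  have h1 : A *ᵥ x = U *ᵥ (diagonal hA.eigenvalues *ᵥ w) := by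
    rw [hw, mulVec_mulVec, mulVec_mulVec]
    conv_lhs => rw [hA.spectral_theorem]
    congr 1
  rw [h1, Matrix.dotProduct_mulVec]
  have h2 : x ᵥ* U = w := by
    rw [hw, ← Matrix.mulVec_transpose]
    rfl
  rw [h2]
  simp only [dotProduct, Matrix.mulVec_diagonal, sq]
  exact Finset.sum_congr rfl (fun i _ => by ring)

lemma norm_spectral {n : ℕ} {A : Matrix (Fin n) (Fin n) ℝ} (hA : A.IsHermitian) (x : Fin n → ℝ) :
    ∑ i, ((star (hA.eigenvectorUnitary : Matrix (Fin n) (Fin n) ℝ)) *ᵥ x) i ^2 = ∑ i, x i ^ 2 := by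
  set U : Matrix (Fin n) (Fin n) ℝ := (hA.eigenvectorUnitary : Matrix (Fin n) (Fin n) ℝ) with hU
  set w : Fin n → ℝ := (star U) *ᵥ x with hw
  have h0 : ∑ i, w i ^2 = w ⬝ᵥ w := by
    simp [dotProduct, sq]
  have h2 : x ᵥ* U = w := by
    rw [hw, ← Matrix.mulVec_transpose]; rfl
  have h3 : x ⬝ᵥ ((U * star U) *ᵥ x) = w ⬝ᵥ w := by
    rw [← Matrix.mulVec_mulVec, Matrix.dotProduct_mulVec, h2, hw]
  have h4 : U * star U = 1 := by
    rw [hU]; exact (Matrix.mem_unitaryGroup_iff).mp hA.eigenvectorUnitary.2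
  rw [h0, ← h3, h4]
  simp [dotProduct, sq]

lemma rayleigh_upper {n : ℕ} [NeZero n] {A : Matrix (Fin n) (Fin n) ℝ} (hA : A.IsHermitian)
    (x : Fin n → ℝ) : x ⬝ᵥ (A *ᵥ x) ≤ (⨆ i, hA.eigenvalues i) * ∑ i, x i ^ 2 := by
  rw [quadform_spectral hA x, ← norm_spectral hA x, Finset.mul_sum]
  refine Finset.sum_le_sum fun i _ => ?_
  exact mul_le_mul_of_nonneg_right (le_ciSup (Set.finite_range _).bddAbove i) (sq_nonneg _)

lemma rayleigh_lower {n : ℕ} [NeZero n] {A : Matrix (Fin n) (Fin n) ℝ} (hA : A.IsHermitian)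
    (x : Fin n → ℝ) : (⨅ i, hA.eigenvalues i) * ∑ i, x i ^ 2 ≤ x ⬝ᵥ (A *ᵥ x) := by
  rw [quadform_spectral hA x, ← norm_spectral hA x, Finset.mul_sum]
  refine Finset.sum_le_sum fun i _ => ?_
  exact mul_le_mul_of_nonneg_right (ciInf_le (Set.finite_range _).bddBelow i) (sq_nonneg _)

lemma quadform_of_unit_eigen {n : ℕ} (A : Matrix (Fin n) (Fin n) ℝ) (lam : ℝ) (z : Fin n → ℝ)
    (hz : ∑ u, z u ^ 2 = 1) (he : A *ᵥ z = lam • z) : z ⬝ᵥ (A *ᵥ z) = lam := by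
  rw [he, dotProduct_smul, smul_eq_mul]
  have : z ⬝ᵥ z = 1 := by rw [← hz]; simp [dotProduct, sq]
  rw [this, mul_one]

lemma eigenvectorBasis_unit {n : ℕ} {A : Matrix (Fin n) (Fin n) ℝ} (hA : A.IsHermitian) (i : Fin n) :
    ∑ u, (hA.eigenvectorBasis i) u ^ 2 = 1 := by
  have h := hA.eigenvectorBasis.orthonormal.1 i
  have h2 := EuclideanSpace.norm_eq (hA.eigenvectorBasis i)
  rw [h] at h2
  have h3 : ∑ u, ‖(hA.eigenvectorBasis i) u‖ ^ 2 = 1 := by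
    have := congrArg (· ^ 2) h2.symm
    simpa [Real.sq_sqrt (Finset.sum_nonneg fun u _ => sq_nonneg _)] using this
  rw [← h3]
  exact Finset.sum_congr rfl fun u _ => by rw [Real.norm_eq_abs, sq_abs]

end Rayleigh

section Quadform

lemma quadform_eq_s7 {n : ℕ} (G : SimpleGraph (Fin n)) (x : Fin n → ℝ) :
    x ⬝ᵥ (adjMat G *ᵥ x) = ∑ u, ∑ v, (if G.Adj u v then x u * x v else 0) := by
  simp only [dotProduct, mulVec, adjMat, Finset.mul_sum]
  refine Finset.sum_congr rfl fun u _ => Finset.sum_congr rfl fun v _ => ?_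
  by_cases h : G.Adj u v <;> simp [h, dotProduct]

lemma offdiag_sum {n : ℕ} (f : Fin n → ℝ) :
    ∑ u, ∑ v, (if u = v then 0 else f u * f v) = (∑ u, f u)^2 - ∑ u, f u ^ 2 := by
  have : ∀ u : Fin n, ∑ v, (if u = v then (0:ℝ) else f u * f v)
      = f u * ∑ v, f v - f u ^ 2 := by
    intro u
    have : ∑ v, (if u = v then (0:ℝ) else f u * f v)
        = ∑ v, (f u * f v - if u = v then f u * f v else 0) := by
      refine Finset.sum_congr rfl fun v _ => ?_
      by_cases h : u = v <;> simp [h]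
    rw [this, Finset.sum_sub_distrib, ← Finset.mul_sum, Finset.sum_ite_eq]
    simp [sq]
  rw [Finset.sum_congr rfl fun u _ => this u, Finset.sum_sub_distrib, ← Finset.sum_mul, sq]

lemma quadform_le {n : ℕ} (G : SimpleGraph (Fin n)) (x : Fin n → ℝ) :
    x ⬝ᵥ (adjMat G *ᵥ x) ≤ ((n:ℝ) - 1) * ∑ u, x u ^ 2 := by
  rw [quadform_eq_s7]
  have step1 : ∑ u, ∑ v, (if G.Adj u v then x u * x v else 0)
      ≤ ∑ u, ∑ v, (if u = v then 0 else |x u| * |x v|) := by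
    refine Finset.sum_le_sum fun u _ => Finset.sum_le_sum fun v _ => ?_
    by_cases h : G.Adj u v
    · simp only [h, if_true, G.ne_of_adj h, if_neg]
      calc x u * x v ≤ |x u * x v| := le_abs_self _
        _ = |x u| * |x v| := abs_mul _ _
    · simp only [h, if_false]
      by_cases h2 : u = v <;> simp [h2] <;> positivity
  refine step1.trans ?_
  rw [offdiag_sum]
  have cs : (∑ u, |x u|)^2 ≤ (n:ℝ) * ∑ u, |x u| ^ 2 := by
    have := sq_sum_le_card_mul_sum_sq (s := Finset.univ) (f := fun u : Fin n => |x u|)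
    simpa using this
  have habs : ∀ u : Fin n, |x u| ^ 2 = x u ^ 2 := fun u => sq_abs _
  simp only [habs] at cs ⊢
  nlinarith [Finset.sum_nonneg (fun u (_ : u ∈ Finset.univ) => sq_nonneg (x u))]

lemma lamMax_le {n : ℕ} [NeZero n] (G : SimpleGraph (Fin n)) : lamMax G ≤ (n:ℝ) - 1 := by
  unfold lamMax graphEigs
  refine ciSup_le fun i => ?_
  set hA := adjMat_isHermitian G
  set v : Fin n → ℝ := fun u => hA.eigenvectorBasis i u with hvdef
  have hv : ∑ u, v u ^ 2 = 1 := eigenvectorBasis_unit hA i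
  have he : adjMat G *ᵥ v = hA.eigenvalues i • v := hA.mulVec_eigenvectorBasis i
  have hq : v ⬝ᵥ (adjMat G *ᵥ v) = hA.eigenvalues i :=
    quadform_of_unit_eigen (adjMat G) (hA.eigenvalues i) v hv he
  have hb := quadform_le G v
  rw [hq, hv, mul_one] at hb
  exact hb

lemma quadform_le_lamMax {n : ℕ} [NeZero n] (G : SimpleGraph (Fin n)) (x : Fin n → ℝ) :
    x ⬝ᵥ (adjMat G *ᵥ x) ≤ lamMax G * ∑ i, x i ^ 2 := by
  unfold lamMax graphEigs
  exact rayleigh_upper (adjMat_isHermitian G) x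

lemma lamMin_le_quadform {n : ℕ} [NeZero n] (G : SimpleGraph (Fin n)) (x : Fin n → ℝ) :
    lamMin G * ∑ i, x i ^ 2 ≤ x ⬝ᵥ (adjMat G *ᵥ x) := by
  unfold lamMin graphEigs
  exact rayleigh_lower (adjMat_isHermitian G) x

end Quadform

section JoinGraph

/-- The join of a clique on `{0,...,a-1}` with an independent set. -/
def joinGraph (n a : ℕ) : SimpleGraph (Fin n) where
  Adj i j := i ≠ j ∧ ((i : ℕ) < a ∨ (j : ℕ) < a)
  symm := by constructor; intro i j ⟨h1, h2⟩; exact ⟨h1.symm, h2.symm⟩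
  loopless := by constructor; intro i ⟨h1, _⟩; exact h1 rfl

lemma sum_ite_lt {n : ℕ} (a : ℕ) (ha : a ≤ n) (c d : ℝ) :
    ∑ u : Fin n, (if (u : ℕ) < a then c else d) = a * c + (n - a : ℕ) * d := by
  rw [Fin.sum_univ_eq_sum_range (fun i => if i < a then c else d)]
  rw [Finset.range_eq_Ico, ← Finset.sum_Ico_consecutive _ (Nat.zero_le a) ha]
  rw [Finset.sum_congr rfl (fun i hi => if_pos (Finset.mem_Ico.mp hi).2),
      Finset.sum_congr rfl (g := fun _ => d) (fun i hi => if_neg (by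
        have := (Finset.mem_Ico.mp hi).1; omega))]
  simp [Nat.card_Ico, mul_comm]

lemma norm_join {n : ℕ} (a : ℕ) (ha : a ≤ n) (p q : ℝ) :
    ∑ u : Fin n, (if (u : ℕ) < a then p else q) ^ 2
      = (a:ℝ) * p^2 + ((n - a : ℕ) : ℝ) * q^2 := by
  rw [← sum_ite_lt a ha (p^2) (q^2)]
  exact Finset.sum_congr rfl fun u _ => by by_cases h : (u:ℕ) < a <;> simp [h]

lemma quadform_join {n a : ℕ} (ha : a ≤ n) (p q : ℝ) :
    (fun u : Fin n => if (u : ℕ) < a then p else q) ⬝ᵥ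
      (adjMat (joinGraph n a) *ᵥ (fun u : Fin n => if (u : ℕ) < a then p else q))
    = ((a:ℝ) * p + (n - a : ℕ) * q)^2 - ((a:ℝ) * p^2 + (n - a : ℕ) * q^2)
      - (((n - a : ℕ) : ℝ) * q)^2 + ((n - a : ℕ) : ℝ) * q^2 := by
  set x : Fin n → ℝ := fun u => if (u : ℕ) < a then p else q with hx
  set y : Fin n → ℝ := fun u => if (u : ℕ) < a then 0 else q with hy
  rw [quadform_eq_s7]
  have key : ∀ u v : Fin n, (if (joinGraph n a).Adj u v then x u * x v else 0)
      = (if u = v then 0 else x u * x v) - (if u = v then 0 else y u * y v) := by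
    intro u v
    by_cases huv : u = v
    · simp [huv, joinGraph]
    · by_cases hu : (u:ℕ) < a
      · have : (joinGraph n a).Adj u v := ⟨huv, Or.inl hu⟩
        simp [this, huv, hy, hx, hu]
      · by_cases hv : (v:ℕ) < a
        · have : (joinGraph n a).Adj u v := ⟨huv, Or.inr hv⟩
          simp [this, huv, hy, hx, hu, hv]
        · have : ¬ (joinGraph n a).Adj u v := by
            intro ⟨_, h⟩; tauto
          simp [this, huv, hy, hx, hu, hv]
  simp only [key]
  rw [Finset.sum_congr rfl (fun u _ => Finset.sum_sub_distrib _ _), Finset.sum_sub_distrib,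
      offdiag_sum, offdiag_sum]
  have hsx : ∑ u, x u = (a:ℝ) * p + (n - a : ℕ) * q := sum_ite_lt a ha p q
  have hsx2 : ∑ u, x u ^ 2 = (a:ℝ) * p^2 + (n - a : ℕ) * q^2 := by
    rw [← sum_ite_lt a ha (p^2) (q^2)]
    exact Finset.sum_congr rfl fun u _ => by by_cases h : (u:ℕ) < a <;> simp [hx, h]
  have hsy : ∑ u, y u = (a:ℝ) * 0 + (n - a : ℕ) * q := sum_ite_lt a ha 0 q
  have hsy2 : ∑ u, y u ^ 2 = (a:ℝ) * 0^2 + (n - a : ℕ) * q^2 := by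
    rw [← sum_ite_lt a ha (0^2) (q^2)]
    exact Finset.sum_congr rfl fun u _ => by by_cases h : (u:ℕ) < a <;> simp [hy, h]
  rw [hsx, hsx2, hsy, hsy2]
  ring

end JoinGraph

set_option maxHeartbeats 1000000 in
/-- In a spread-extremal graph, both the set of vertices where the bottom
eigenvector is nonnegative and the set where it is negative have linear size. -/
theorem spread_extremal_linear_parts :
    ∃ c : ℝ, 0 < c ∧ ∃ N : ℕ, ∀ n : ℕ, N ≤ n →
      ∀ G : SimpleGraph (Fin n), (∀ H : SimpleGraph (Fin n), spread H ≤ spread G) →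
      ∀ z : Fin n → ℝ, (∑ u, z u ^ 2 = 1) →
        (adjMat G).mulVec z = lamMin G • z →
        c * n ≤ (({u : Fin n | 0 ≤ z u}).ncard : ℝ) ∧
        c * n ≤ (({u : Fin n | z u < 0}).ncard : ℝ) := by
  refine ⟨1/400, by norm_num, 3, fun n hn G hext z hz hze => ?_⟩
  have hn0 : 0 < n := by omega
  have : NeZero n := ⟨by omega⟩
  -- Step 1: the smallest eigenvalue is very negative
  have key : (n:ℝ)/10 ≤ - lamMin G := by
    set k := n / 3 with hk
    set a := n - k with hadef
    have hfacts : 3 * k ≤ n ∧ n ≤ 3*k + 2 ∧ 1 ≤ k ∧ a ≤ n ∧ n - a = k := by omega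
    obtain ⟨hk1, hk2, hk3, ha, hna⟩ := hfacts
    set J := joinGraph n a with hJ
    set A : ℝ := (a : ℝ) with hA
    set B : ℝ := (k : ℝ) with hB
    have hAB : A + B = (n:ℝ) := by
      rw [hA, hB, hadef, Nat.cast_sub (by omega : k ≤ n)]; ring
    have hB1 : (1:ℝ) ≤ B := by rw [hB]; exact_mod_cast hk3
    have hBn1 : 3 * B ≤ (n:ℝ) := by rw [hB]; exact_mod_cast hk1
    have hBn2 : (n:ℝ) ≤ 3 * B + 2 := by rw [hB]; exact_mod_cast hk2
    have hApos : (0:ℝ) < A := by nlinarith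
    -- test vectors
    have hq1 := quadform_join (n := n) (a := a) ha 4 3
    have hq2 := quadform_join (n := n) (a := a) ha 10 (-27)
    have hn1 := norm_join (n := n) a ha 4 3
    have hn2 := norm_join (n := n) a ha 10 (-27)
    rw [hna] at hq1 hq2 hn1 hn2
    have hray1 := quadform_le_lamMax (joinGraph n a)
      (fun u : Fin n => if (u : ℕ) < a then (4:ℝ) else 3)
    have hray2 := lamMin_le_quadform (joinGraph n a)
      (fun u : Fin n => if (u : ℕ) < a then (10:ℝ) else -27)
    rw [hq1, hn1] at hray1
    rw [hq2, hn2] at hray2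
    rw [← hA, ← hB] at hray1 hray2
    -- abbreviations
    set M₁ := lamMax (joinGraph n a) with hM1
    set M₂ := lamMin (joinGraph n a) with hM2
    have hN1 : (0:ℝ) < A * 4^2 + B * 3^2 := by nlinarith
    have hN2 : (0:ℝ) < A * 10^2 + B * (-27:ℝ)^2 := by nlinarith
    -- the quadratic forms in closed polynomial form
    have hQ1 : (A * 4 + B * 3)^2 - (A * 4^2 + B * 3^2) - (B * 3)^2 + B * 3^2
        = 16*A*(A-1) + 24*A*B := by ring
    have hQ2 : (A * 10 + B * (-27))^2 - (A * 10^2 + B * (-27:ℝ)^2) - (B * (-27:ℝ))^2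
          + B * (-27:ℝ)^2 = 100*A*(A-1) - 540*A*B := by ring
    rw [hQ1] at hray1
    rw [hQ2] at hray2
    -- spread of the join graph is large
    have hspreadJ : (16*A*(A-1) + 24*A*B) / (A * 4^2 + B * 3^2)
        - (100*A*(A-1) - 540*A*B) / (A * 10^2 + B * (-27:ℝ)^2)
        ≤ spread (joinGraph n a) := by
      unfold spread
      have l1 : (16*A*(A-1) + 24*A*B) / (A * 4^2 + B * 3^2) ≤ M₁ :=
        (div_le_iff₀ hN1).mpr hray1
      have l2 : M₂ ≤ (100*A*(A-1) - 540*A*B) / (A * 10^2 + B * (-27:ℝ)^2) :=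
        (le_div_iff₀ hN2).mpr hray2
      rw [← hM1, ← hM2]
      linarith
    -- the numeric inequality
    have hnum : (n:ℝ)/10 + ((n:ℝ) - 1)
        ≤ (16*A*(A-1) + 24*A*B) / (A * 4^2 + B * 3^2)
          - (100*A*(A-1) - 540*A*B) / (A * 10^2 + B * (-27:ℝ)^2) := by
      rw [div_sub_div _ _ hN1.ne' hN2.ne', le_div_iff₀ (by positivity)]
      have hAn : A = (n:ℝ) - B := by linarith
      rw [hAn]
      set r : ℝ := (n:ℝ) - 3*B with hr
      have hr0 : 0 ≤ r := by rw [hr]; linarith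
      have hr2 : r ≤ 2 := by rw [hr]; linarith
      have hnr : (n:ℝ) = 3*B + r := by rw [hr]; ring
      rw [hnr]
      clear_value A B r
      have hB0 : (0:ℝ) ≤ B := by linarith
      have f1 : (0:ℝ) ≤ (2 - r) * r^2 := mul_nonneg (by linarith) (sq_nonneg r)
      have f2 : (0:ℝ) ≤ (2 - r) * (r * B) := mul_nonneg (by linarith) (mul_nonneg hr0 hB0)
      have f3 : (0:ℝ) ≤ (2 - r) * r := mul_nonneg (by linarith) hr0
      have f4 : (0:ℝ) ≤ (B - 1) * (r * B) := mul_nonneg (by linarith) (mul_nonneg hr0 hB0)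
      have f5 : (0:ℝ) ≤ (B - 1) * r := mul_nonneg (by linarith) hr0
      have f6 : (0:ℝ) ≤ B^3 := by positivity
      have f7 : (0:ℝ) ≤ B^2 := sq_nonneg B
      have f8 : (0:ℝ) ≤ r * B^2 := mul_nonneg hr0 f7
      linarith [f1, f2, f3, f4, f5, f6, f7, f8]
    have hGmax : lamMax G ≤ (n:ℝ) - 1 := lamMax_le G
    have hs : spread (joinGraph n a) ≤ spread G := hext _
    have : spread G = lamMax G - lamMin G := rfl
    linarith
  -- Step 2: combinatorial conclusion
  have hlam : z ⬝ᵥ (adjMat G *ᵥ z) = lamMin G :=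
    quadform_of_unit_eigen _ _ _ hz hze
  set pf : Fin n → ℝ := fun u => max (z u) 0 with hpf
  set mf : Fin n → ℝ := fun u => max (-(z u)) 0 with hmf
  have hpf0 : ∀ u, 0 ≤ pf u := fun u => le_max_right _ _
  have hmf0 : ∀ u, 0 ≤ mf u := fun u => le_max_right _ _
  have hsub : ∀ u, pf u - mf u = z u := by
    intro u
    rcases le_or_gt 0 (z u) with h | h
    · rw [hpf, hmf]; simp [max_eq_left h, max_eq_right (by linarith : -(z u) ≤ 0)]
    · rw [hpf, hmf]
      simp [max_eq_right (le_of_lt h), max_eq_left (by linarith : (0:ℝ) ≤ -(z u))]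
  have hprod : ∀ u, pf u * mf u = 0 := by
    intro u
    rcases le_or_gt 0 (z u) with h | h
    · rw [hmf]; simp [max_eq_right (by linarith : -(z u) ≤ 0)]
    · rw [hpf]; simp [max_eq_right (le_of_lt h)]
  have hble : - lamMin G ≤ 2 * (∑ u, pf u) * (∑ u, mf u) := by
    rw [← hlam, quadform_eq_s7]
    have pointwise : ∀ u v : Fin n, -(if G.Adj u v then z u * z v else 0)
        ≤ pf u * mf v + mf u * pf v := by
      intro u v
      by_cases h : G.Adj u v
      · simp only [h, if_true]
        have h1 := hsub u; have h2 := hsub v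
        have h3 := hprod u; have h4 := hprod v
        rw [← h1, ← h2]
        nlinarith [mul_nonneg (hpf0 u) (hpf0 v), mul_nonneg (hmf0 u) (hmf0 v)]
      · simp only [h, if_false, neg_zero]
        have := mul_nonneg (hpf0 u) (hmf0 v)
        have := mul_nonneg (hmf0 u) (hpf0 v)
        linarith
    calc -(∑ u, ∑ v, (if G.Adj u v then z u * z v else 0))
        = ∑ u, ∑ v, -(if G.Adj u v then z u * z v else 0) := by
          rw [← Finset.sum_neg_distrib]
          exact Finset.sum_congr rfl fun u _ => (Finset.sum_neg_distrib _).symm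
      _ ≤ ∑ u, ∑ v, (pf u * mf v + mf u * pf v) :=
          Finset.sum_le_sum fun u _ => Finset.sum_le_sum fun v _ => pointwise u v
      _ = 2 * (∑ u, pf u) * (∑ u, mf u) := by
          simp only [Finset.sum_add_distrib, ← Finset.mul_sum]
          rw [← Finset.sum_mul, ← Finset.sum_mul]
          ring
  -- Cauchy-Schwarz bounds for the two parts
  set P := Finset.univ.filter (fun u : Fin n => 0 ≤ z u) with hPdef
  set M := Finset.univ.filter (fun u : Fin n => z u < 0) with hMdef
  have hsump : ∑ u, pf u = ∑ u ∈ P, z u := by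
    rw [hPdef, Finset.sum_filter]
    refine Finset.sum_congr rfl fun u _ => ?_
    rcases le_or_gt 0 (z u) with h | h
    · simp [hpf, max_eq_left h, h]
    · simp [hpf, max_eq_right (le_of_lt h), not_le.mpr h]
  have hsumm : ∑ u, mf u = ∑ u ∈ M, -(z u) := by
    rw [hMdef, Finset.sum_filter]
    refine Finset.sum_congr rfl fun u _ => ?_
    rcases le_or_gt 0 (z u) with h | h
    · simp [hmf, max_eq_right (by linarith : -(z u) ≤ 0), not_lt.mpr h]
    · simp [hmf, max_eq_left (by linarith : (0:ℝ) ≤ -(z u)), h]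
  have hsq_le_one : ∀ s : Finset (Fin n), ∑ u ∈ s, z u ^ 2 ≤ 1 := by
    intro s
    rw [← hz]
    exact Finset.sum_le_sum_of_subset_of_nonneg (Finset.subset_univ s)
      (fun u _ _ => sq_nonneg _)
  have hTp2 : (∑ u, pf u)^2 ≤ (P.card : ℝ) := by
    rw [hsump]
    calc (∑ u ∈ P, z u)^2 ≤ (P.card : ℝ) * ∑ u ∈ P, z u ^ 2 := by
          exact_mod_cast sq_sum_le_card_mul_sum_sq (s := P) (f := z)
      _ ≤ (P.card : ℝ) * 1 := by
          exact mul_le_mul_of_nonneg_left (hsq_le_one P) (by positivity)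
      _ = (P.card : ℝ) := mul_one _
  have hTm2 : (∑ u, mf u)^2 ≤ (M.card : ℝ) := by
    rw [hsumm]
    calc (∑ u ∈ M, -(z u))^2 ≤ (M.card : ℝ) * ∑ u ∈ M, (-(z u)) ^ 2 := by
          exact_mod_cast sq_sum_le_card_mul_sum_sq (s := M) (f := fun u => -(z u))
      _ ≤ (M.card : ℝ) * 1 := by
          refine mul_le_mul_of_nonneg_left ?_ (by positivity)
          calc ∑ u ∈ M, (-(z u))^2 = ∑ u ∈ M, z u ^ 2 :=
                Finset.sum_congr rfl fun u _ => by ring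
            _ ≤ 1 := hsq_le_one M
      _ = (M.card : ℝ) := mul_one _
  have hPn : (P.card : ℝ) ≤ n := by exact_mod_cast (Finset.card_filter_le _ _).trans_eq (Finset.card_univ.trans (Fintype.card_fin n))
  have hMn : (M.card : ℝ) ≤ n := by exact_mod_cast (Finset.card_filter_le _ _).trans_eq (Finset.card_univ.trans (Fintype.card_fin n))
  have hTp0 : 0 ≤ ∑ u, pf u := Finset.sum_nonneg fun u _ => hpf0 u
  have hTm0 : 0 ≤ ∑ u, mf u := Finset.sum_nonneg fun u _ => hmf0 u
  have hP0 : (0:ℝ) ≤ P.card := by positivity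
  have hM0 : (0:ℝ) ≤ M.card := by positivity
  have hn0R : (0:ℝ) < n := by exact_mod_cast hn0
  -- (n/10)^2 ≤ 4 * Tp^2 * Tm^2 ≤ 4 * P.card * M.card
  have hsq : (n:ℝ)^2/100 ≤ 4 * ((P.card : ℝ) * (M.card : ℝ)) := by
    have h1 : (n:ℝ)/10 ≤ 2 * (∑ u, pf u) * (∑ u, mf u) := le_trans key hble
    have h2 : ((n:ℝ)/10)^2 ≤ (2 * (∑ u, pf u) * (∑ u, mf u))^2 := by
      have := mul_self_le_mul_self (by positivity : (0:ℝ) ≤ (n:ℝ)/10) h1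
      simpa [sq] using this
    have h3 : (∑ u, pf u)^2 * (∑ u, mf u)^2 ≤ (P.card : ℝ) * (M.card : ℝ) :=
      mul_le_mul hTp2 hTm2 (sq_nonneg _) hP0
    nlinarith
  have hcardP : (1/400 : ℝ) * n ≤ (P.card : ℝ) := by
    nlinarith [mul_le_mul_of_nonneg_left hMn hP0]
  have hcardM : (1/400 : ℝ) * n ≤ (M.card : ℝ) := by
    nlinarith [mul_le_mul_of_nonneg_left hPn hM0]
  constructor
  · have : ({u : Fin n | 0 ≤ z u}).ncard = P.card := by
      rw [Set.ncard_eq_toFinset_card', Set.toFinset_setOf]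
    rw [this]; exact hcardP
  · have : ({u : Fin n | z u < 0}).ncard = M.card := by
      rw [Set.ncard_eq_toFinset_card', Set.toFinset_setOf]
    rw [this]; exact hcardM
end

section
/- There exist a constant C > 0 and N ∈ ℕ such that for all n ≥ N the following holds: if G is a simple graph on n vertices with s(G) = s(n), x is a unit eigenvector of the adjacency matrix of G for λ₁(G), and z is a unit eigenvector for λₙ(G), then max_u |x_u| ≤ C·n^{−1/2} and max_u |z_u| ≤ C·n^{−1/2}. -/
/-! ### Auxiliary lemmas -/

open Matrix Finset

namespace SpreadAux

variable {n : ℕ}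

lemma quad_decomp (A : Matrix (Fin n) (Fin n) ℝ) (hA : A.IsHermitian) (v : Fin n → ℝ) :
    v ⬝ᵥ A *ᵥ v = ∑ i, hA.eigenvalues i *
        ((star (hA.eigenvectorUnitary : Matrix (Fin n) (Fin n) ℝ)) *ᵥ v) i ^ 2 ∧
    v ⬝ᵥ v = ∑ i, ((star (hA.eigenvectorUnitary : Matrix (Fin n) (Fin n) ℝ)) *ᵥ v) i ^ 2 := by
  set U : Matrix (Fin n) (Fin n) ℝ := (hA.eigenvectorUnitary : Matrix (Fin n) (Fin n) ℝ) with hU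
  set c : Fin n → ℝ := (star U) *ᵥ v with hc
  have hvec : vecMul v U = c := by
    ext i
    simp [hc, vecMul, mulVec, dotProduct, star, conjTranspose, mul_comm]
  constructor
  · conv_lhs => rw [hA.spectral_theorem, Unitary.conjStarAlgAut_apply]
    rw [← mulVec_mulVec, ← mulVec_mulVec, dotProduct_mulVec, hvec]
    simp only [dotProduct, mulVec_diagonal, Function.comp_apply, RCLike.ofReal_real_eq_id, id_eq]
    exact Finset.sum_congr rfl fun i _ => by ring
  · have hUU : U * star U = 1 := (Matrix.mem_unitaryGroup_iff).mp hA.eigenvectorUnitary.2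
    have h2 : c ᵥ* (star U) = U *ᵥ c := by
      ext i
      simp [vecMul, mulVec, dotProduct, star, conjTranspose, mul_comm]
    have : c ⬝ᵥ c = v ⬝ᵥ v := by
      conv_lhs => rw [show (c ⬝ᵥ c) = c ⬝ᵥ (star U *ᵥ v) from by rw [← hc]]
      rw [dotProduct_mulVec, h2, hc, mulVec_mulVec, hUU, one_mulVec]
    rw [← this]
    simp [dotProduct, sq]

lemma eig_le_lamMax (G : SimpleGraph (Fin n)) (i : Fin n) : graphEigs G i ≤ lamMax G :=
  le_ciSup (Set.Finite.bddAbove (Set.finite_range _)) i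

lemma lamMin_le_eig (G : SimpleGraph (Fin n)) (i : Fin n) : lamMin G ≤ graphEigs G i :=
  ciInf_le (Set.Finite.bddBelow (Set.finite_range _)) i

lemma quad_bounds (G : SimpleGraph (Fin n)) (v : Fin n → ℝ) :
    lamMin G * (∑ i, v i ^ 2) ≤ v ⬝ᵥ (adjMat G) *ᵥ v ∧
    v ⬝ᵥ (adjMat G) *ᵥ v ≤ lamMax G * (∑ i, v i ^ 2) := by
  obtain ⟨h1, h2⟩ := quad_decomp (adjMat G) (adjMat_isHermitian G) v
  have hvv : v ⬝ᵥ v = ∑ i, v i ^ 2 := by simp [dotProduct, sq]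
  rw [hvv] at h2
  set c := (star ((adjMat_isHermitian G).eigenvectorUnitary : Matrix (Fin n) (Fin n) ℝ)) *ᵥ v
  constructor
  · rw [h1, h2, Finset.mul_sum]
    exact Finset.sum_le_sum fun i _ =>
      mul_le_mul_of_nonneg_right (lamMin_le_eig G i) (sq_nonneg _)
  · rw [h1, h2, Finset.mul_sum]
    exact Finset.sum_le_sum fun i _ =>
      mul_le_mul_of_nonneg_right (eig_le_lamMax G i) (sq_nonneg _)

lemma exists_lamMax_eq (hn : 0 < n) (G : SimpleGraph (Fin n)) :
    ∃ i, lamMax G = graphEigs G i := by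
  haveI : Nonempty (Fin n) := ⟨⟨0, hn⟩⟩
  obtain ⟨i, hi⟩ := Finite.exists_max (graphEigs G)
  exact ⟨i, le_antisymm (ciSup_le hi) (eig_le_lamMax G i)⟩

lemma exists_lamMin_eq (hn : 0 < n) (G : SimpleGraph (Fin n)) :
    ∃ i, lamMin G = graphEigs G i := by
  haveI : Nonempty (Fin n) := ⟨⟨0, hn⟩⟩
  obtain ⟨i, hi⟩ := Finite.exists_min (graphEigs G)
  exact ⟨i, le_antisymm (lamMin_le_eig G i) (le_ciInf hi)⟩

lemma eigenBasis_vec_ne_zero (G : SimpleGraph (Fin n)) (i : Fin n) :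
    ⇑((adjMat_isHermitian G).eigenvectorBasis i) ≠ (0 : Fin n → ℝ) := by
  intro h0
  apply (adjMat_isHermitian G).eigenvectorBasis.orthonormal.ne_zero i
  ext j
  exact congrFun h0 j

lemma adjMat_entry_abs_le (G : SimpleGraph (Fin n)) (i j : Fin n) :
    |adjMat G i j| ≤ 1 := by
  classical
  unfold adjMat
  split <;> norm_num

lemma adjMat_diag (G : SimpleGraph (Fin n)) (i : Fin n) : adjMat G i i = 0 := by
  classical
  simp [adjMat]

/-- any eigenvalue of the adjacency matrix is at most `n-1` in absolute value. -/
lemma eig_abs_le (G : SimpleGraph (Fin n)) (μ : ℝ) (w : Fin n → ℝ) (hw : w ≠ 0)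
    (h : (adjMat G) *ᵥ w = μ • w) : |μ| ≤ (n : ℝ) - 1 := by
  classical
  have hne : (Finset.univ : Finset (Fin n)).Nonempty := by
    rcases Function.ne_iff.mp hw with ⟨i, -⟩
    exact ⟨i, Finset.mem_univ i⟩
  obtain ⟨i, -, hi⟩ := Finset.exists_max_image Finset.univ (fun i => |w i|) hne
  have hwi : 0 < |w i| := by
    rcases Function.ne_iff.mp hw with ⟨j, hj⟩
    have : 0 < |w j| := abs_pos.mpr hj
    linarith [hi j (Finset.mem_univ j)]
  have key : |μ| * |w i| ≤ ((n : ℝ) - 1) * |w i| := by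
    have hmu : μ * w i = ∑ j, adjMat G i j * w j := by
      have := congrFun h i
      simpa [mulVec, dotProduct, Pi.smul_apply, smul_eq_mul] using this.symm
    have habs : |μ * w i| ≤ ∑ j ∈ Finset.univ.erase i, |w j| := by
      rw [hmu]
      have : ∑ j, adjMat G i j * w j = ∑ j ∈ Finset.univ.erase i, adjMat G i j * w j := by
        rw [Finset.sum_erase_eq_sub (Finset.mem_univ i), adjMat_diag]
        ring
      rw [this]
      refine (Finset.abs_sum_le_sum_abs _ _).trans (Finset.sum_le_sum fun j _ => ?_)
      rw [abs_mul]
      exact mul_le_of_le_one_left (abs_nonneg _) (adjMat_entry_abs_le G i j)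
    have h2 : ∑ j ∈ Finset.univ.erase i, |w j| ≤ ((n : ℝ) - 1) * |w i| := by
      calc ∑ j ∈ Finset.univ.erase i, |w j| ≤ ∑ j ∈ Finset.univ.erase i, |w i| :=
            Finset.sum_le_sum fun j _ => hi j (Finset.mem_univ j)
        _ = ((n : ℝ) - 1) * |w i| := by
            rw [Finset.sum_const, Finset.card_erase_of_mem (Finset.mem_univ i)]
            have hn : 1 ≤ n := Fin.pos i
            rw [Finset.card_univ, Fintype.card_fin, nsmul_eq_mul]
            push_cast [Nat.cast_sub hn]
            ring
    calc |μ| * |w i| = |μ * w i| := (abs_mul μ (w i)).symm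
      _ ≤ _ := habs.trans h2
  exact le_of_mul_le_mul_right key hwi

lemma graphEig_abs_le (G : SimpleGraph (Fin n)) (i : Fin n) :
    |graphEigs G i| ≤ (n : ℝ) - 1 :=
  eig_abs_le G _ _ (eigenBasis_vec_ne_zero G i)
    ((adjMat_isHermitian G).mulVec_eigenvectorBasis i)

/-- entry bound from eigen-equation and Cauchy-Schwarz -/
lemma entry_bound (G : SimpleGraph (Fin n)) (μ : ℝ) (x : Fin n → ℝ)
    (hx : ∑ u, x u ^ 2 = 1) (heig : (adjMat G) *ᵥ x = μ • x)
    (hμ : (n : ℝ) / 10 ≤ |μ|) (hn : 0 < n) (u : Fin n) :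
    |x u| ≤ 10 / Real.sqrt n := by
  classical
  have hcs : (μ * x u) ^ 2 ≤ (n : ℝ) := by
    have hmu : μ * x u = ∑ j, adjMat G u j * x j := by
      have := congrFun heig u
      simpa [mulVec, dotProduct, Pi.smul_apply, smul_eq_mul] using this.symm
    rw [hmu]
    calc (∑ j, adjMat G u j * x j) ^ 2 ≤ (∑ j, adjMat G u j ^ 2) * ∑ j, x j ^ 2 :=
          Finset.sum_mul_sq_le_sq_mul_sq _ _ _
      _ ≤ (n : ℝ) * 1 := by
          refine mul_le_mul ?_ (le_of_eq hx) (by positivity) (by positivity)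
          calc ∑ j, adjMat G u j ^ 2 ≤ ∑ _j : Fin n, (1 : ℝ) :=
                Finset.sum_le_sum fun j _ => by
                  unfold adjMat; split <;> norm_num
            _ = (n : ℝ) := by simp
      _ = (n : ℝ) := mul_one _
  have hs : |μ * x u| ≤ Real.sqrt n := by
    rw [← Real.sqrt_sq_eq_abs]
    exact Real.sqrt_le_sqrt hcs
  have hsq : Real.sqrt n * Real.sqrt n = (n : ℝ) :=
    Real.mul_self_sqrt (Nat.cast_nonneg n)
  have hspos : 0 < Real.sqrt n := Real.sqrt_pos.mpr (by exact_mod_cast hn)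
  rw [abs_mul] at hs
  have h1 : |x u| * ((n : ℝ) / 10) ≤ Real.sqrt n := by
    calc |x u| * ((n : ℝ) / 10) ≤ |x u| * |μ| :=
          mul_le_mul_of_nonneg_left hμ (abs_nonneg _)
      _ = |μ| * |x u| := mul_comm _ _
      _ ≤ Real.sqrt n := hs
  have h2 : |x u| * Real.sqrt n ≤ 10 := by
    nlinarith [abs_nonneg (x u), hspos, hsq]
  rw [le_div_iff₀ hspos]
  exact h2

lemma sum_step (N a b : ℕ) (c d : ℝ) (hab : a ≤ b) (hbn : b ≤ N) :
    ∑ t ∈ Finset.range N, (if t < a then c else if t < b then d else 0)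
      = a * c + ((b : ℝ) - a) * d := by
  rw [← Finset.sum_subset (Finset.range_subset_range.mpr hbn)
    (fun t _ ht => by
      simp only [Finset.mem_range, not_lt] at ht
      rw [if_neg (by omega), if_neg (by omega)])]
  rw [Finset.range_eq_Ico, ← Finset.sum_Ico_consecutive _ (Nat.zero_le a) hab]
  rw [show ∑ t ∈ Finset.Ico 0 a, (if t < a then c else if t < b then d else 0)
      = ∑ t ∈ Finset.Ico 0 a, c from Finset.sum_congr rfl fun t ht => by
        rw [if_pos (Finset.mem_Ico.mp ht).2]]
  rw [show ∑ t ∈ Finset.Ico a b, (if t < a then c else if t < b then d else 0)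
      = ∑ t ∈ Finset.Ico a b, d from Finset.sum_congr rfl fun t ht => by
        obtain ⟨h1, h2⟩ := Finset.mem_Ico.mp ht
        rw [if_neg (by omega), if_pos h2]]
  rw [Finset.sum_const, Finset.sum_const, Nat.card_Ico, Nat.card_Ico, nsmul_eq_mul, nsmul_eq_mul]
  push_cast [Nat.cast_sub hab, Nat.sub_zero]
  ring

lemma sum_ind (N a : ℕ) (c : ℝ) (han : a ≤ N) :
    ∑ t ∈ Finset.range N, (if t < a then c else 0) = a * c := by
  have h := sum_step N a a c c le_rfl han
  have h2 : ∑ t ∈ Finset.range N, (if t < a then c else 0)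
      = ∑ t ∈ Finset.range N, (if t < a then c else if t < a then c else 0) :=
    Finset.sum_congr rfl fun t _ => by split <;> simp
  rw [h2, h]
  ring

/-- The split graph: clique on `[0, 2m)` joined to the independent set `[2m, 3m)`. -/
def splitG (n m : ℕ) : SimpleGraph (Fin n) :=
  SimpleGraph.fromRel (fun i j => i.val < 2*m ∧ j.val < 3*m)

noncomputable def splitVec (n m : ℕ) (q : ℝ) : Fin n → ℝ :=
  fun i => if i.val < 2*m then 1 else if i.val < 3*m then q else 0

lemma split_quad (n m : ℕ) (h3 : 3*m ≤ n) (q : ℝ) :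
    (splitVec n m q) ⬝ᵥ (adjMat (splitG n m)) *ᵥ (splitVec n m q)
      = 4*(m:ℝ)^2 - 2*m + 4*m^2*q
  ∧ ∑ i, (splitVec n m q i)^2 = 2*(m:ℝ) + m*q^2 := by
  classical
  set v := splitVec n m q with hv
  have hsumv : ∑ j, v j = 2*(m:ℝ) + m*q := by
    rw [hv]
    unfold splitVec
    rw [Fin.sum_univ_eq_sum_range (fun t => if t < 2*m then (1:ℝ) else if t < 3*m then q else 0) n]
    rw [sum_step n (2*m) (3*m) 1 q (by omega) h3]
    push_cast
    ring
  have hAdj : ∀ i j : Fin n, (splitG n m).Adj i j ↔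
      i ≠ j ∧ ((i.val < 2*m ∧ j.val < 3*m) ∨ (j.val < 2*m ∧ i.val < 3*m)) := by
    intro i j
    simp [splitG, SimpleGraph.fromRel_adj]
  have hmv : ∀ i : Fin n, ((adjMat (splitG n m)) *ᵥ v) i =
      (if i.val < 2*m then (2*(m:ℝ) + m*q - 1) else if i.val < 3*m then 2*m else 0) := by
    intro i
    by_cases hi : i.val < 2*m
    · rw [if_pos hi]
      have hterm : ∀ j : Fin n, adjMat (splitG n m) i j * v j
          = v j - (if j = i then v j else 0) := by
        intro j
        by_cases hj : j = i
        · subst hj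
          simp [adjMat, SimpleGraph.irrefl]
        · rw [if_neg hj, sub_zero]
          by_cases h3j : j.val < 3*m
          · rw [show adjMat (splitG n m) i j = 1 from by
              unfold adjMat
              rw [if_pos ((hAdj i j).mpr ⟨fun h => hj h.symm, Or.inl ⟨hi, h3j⟩⟩)]]
            ring
          · have hv0 : v j = 0 := by
              rw [hv]; unfold splitVec
              rw [if_neg (by omega), if_neg h3j]
            rw [hv0, mul_zero]
      have : ((adjMat (splitG n m)) *ᵥ v) i = ∑ j, (v j - (if j = i then v j else 0)) := by
        unfold mulVec dotProduct
        exact Finset.sum_congr rfl fun j _ => hterm j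
      rw [this, Finset.sum_sub_distrib, Finset.sum_ite_eq' Finset.univ i v,
        if_pos (Finset.mem_univ i), hsumv]
      have : v i = 1 := by rw [hv]; unfold splitVec; rw [if_pos hi]
      rw [this]
    · rw [if_neg hi]
      by_cases h3i : i.val < 3*m
      · rw [if_pos h3i]
        have hterm : ∀ j : Fin n, adjMat (splitG n m) i j * v j
            = (if j.val < 2*m then (1:ℝ) else 0) := by
          intro j
          by_cases hj2 : j.val < 2*m
          · rw [if_pos hj2]
            rw [show adjMat (splitG n m) i j = 1 from by
              unfold adjMat
              rw [if_pos ((hAdj i j).mpr ⟨by intro h; subst h; omega, Or.inr ⟨hj2, h3i⟩⟩)]]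
            have : v j = 1 := by rw [hv]; unfold splitVec; rw [if_pos hj2]
            rw [this, mul_one]
          · rw [if_neg hj2]
            rw [show adjMat (splitG n m) i j = 0 from by
              unfold adjMat
              rw [if_neg (by rw [hAdj]; push_neg; intro _; constructor <;> omega)]]
            ring
        have : ((adjMat (splitG n m)) *ᵥ v) i
            = ∑ j : Fin n, (if j.val < 2*m then (1:ℝ) else 0) := by
          unfold mulVec dotProduct
          exact Finset.sum_congr rfl fun j _ => hterm j
        rw [this, Fin.sum_univ_eq_sum_range (fun t => if t < 2*m then (1:ℝ) else 0) n,
          sum_ind n (2*m) 1 (by omega)]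
        push_cast; ring
      · rw [if_neg h3i]
        have hterm : ∀ j : Fin n, adjMat (splitG n m) i j * v j = 0 := by
          intro j
          rw [show adjMat (splitG n m) i j = 0 from by
            unfold adjMat
            rw [if_neg (by rw [hAdj]; push_neg; intro _; constructor <;> omega)]]
          ring
        unfold mulVec dotProduct
        exact Finset.sum_eq_zero fun j _ => hterm j
  constructor
  · unfold dotProduct
    have hpt : ∀ i : Fin n, v i * ((adjMat (splitG n m)) *ᵥ v) i
        = (if i.val < 2*m then (2*(m:ℝ) + m*q - 1) else if i.val < 3*m then q*(2*m) else 0) := by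
      intro i
      rw [hmv i]
      rw [hv]; unfold splitVec
      by_cases hi : i.val < 2*m
      · rw [if_pos hi, if_pos hi, if_pos hi, one_mul]
      · rw [if_neg hi, if_neg hi, if_neg hi]
        by_cases h3i : i.val < 3*m
        · rw [if_pos h3i, if_pos h3i, if_pos h3i]
        · rw [if_neg h3i, if_neg h3i, if_neg h3i, mul_zero]
    rw [Finset.sum_congr rfl fun i _ => hpt i]
    rw [Fin.sum_univ_eq_sum_range
      (fun t => if t < 2*m then (2*(m:ℝ) + m*q - 1) else if t < 3*m then q*(2*m) else 0) n]
    rw [sum_step n (2*m) (3*m) _ _ (by omega) h3]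
    push_cast
    ring
  · have hpt : ∀ i : Fin n, v i ^ 2
        = (if i.val < 2*m then (1:ℝ) else if i.val < 3*m then q^2 else 0) := by
      intro i
      rw [hv]; unfold splitVec
      split
      · norm_num
      · split
        · rfl
        · norm_num
    rw [Finset.sum_congr rfl fun i _ => hpt i]
    rw [Fin.sum_univ_eq_sum_range (fun t => if t < 2*m then (1:ℝ) else if t < 3*m then q^2 else 0) n]
    rw [sum_step n (2*m) (3*m) _ _ (by omega) h3]
    push_cast
    ring

end SpreadAux

open SpreadAux in
/-- Extremal eigenvectors of a spread-extremal graph have infinity norm `O(n^{-1/2})`. -/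
theorem spread_extremal_eigenvector_linf :
    ∃ C : ℝ, 0 < C ∧ ∃ N : ℕ, ∀ n : ℕ, N ≤ n →
      ∀ G : SimpleGraph (Fin n), (∀ H : SimpleGraph (Fin n), spread H ≤ spread G) →
      ∀ x z : Fin n → ℝ, (∑ u, x u ^ 2 = 1) → (∑ u, z u ^ 2 = 1) →
        (adjMat G).mulVec x = lamMax G • x →
        (adjMat G).mulVec z = lamMin G • z →
        ∀ u : Fin n, |x u| ≤ C / Real.sqrt n ∧ |z u| ≤ C / Real.sqrt n := by
  refine ⟨10, by norm_num, 200, fun n hn G hext x z hx hz heigx heigz u => ?_⟩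
  have hnpos : 0 < n := by omega
  set m := n / 3 with hm
  have hm3 : 3 * m ≤ n := by omega
  have hn3 : n ≤ 3 * m + 2 := by omega
  have hmpos : (0:ℝ) < m := by
    have : 66 ≤ m := by omega
    exact_mod_cast by omega
  set H := splitG n m with hH
  -- Rayleigh bound for λmax H with q = 3/4
  have hA : (7*(m:ℝ)^2 - 2*m) ≤ lamMax H * (2*(m:ℝ) + m*(3/4:ℝ)^2) := by
    have h := (quad_bounds H (splitVec n m (3/4))).2
    rw [(split_quad n m hm3 (3/4)).1, (split_quad n m hm3 (3/4)).2] at h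
    linarith
  have hB : lamMin H * (2*(m:ℝ) + m*(-(11/4):ℝ)^2) ≤ (-7*(m:ℝ)^2 - 2*m) := by
    have h := (quad_bounds H (splitVec n m (-(11/4)))).1
    rw [(split_quad n m hm3 (-(11/4))).1, (split_quad n m hm3 (-(11/4))).2] at h
    linarith
  have hA' : (112*(m:ℝ) - 32)/41 ≤ lamMax H := by
    rw [div_le_iff₀ (by norm_num : (0:ℝ) < 41)]
    nlinarith [hA, hmpos]
  have hB' : lamMin H ≤ -((112*(m:ℝ) + 32)/153) := by
    rw [le_neg, div_le_iff₀ (by norm_num : (0:ℝ) < 153)]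
    nlinarith [hB, hmpos]
  -- eigenvalue bounds for G
  have hmaxG : |lamMax G| ≤ (n:ℝ) - 1 := by
    obtain ⟨i, hi⟩ := exists_lamMax_eq hnpos G
    rw [hi]; exact graphEig_abs_le G i
  have hminG : |lamMin G| ≤ (n:ℝ) - 1 := by
    obtain ⟨i, hi⟩ := exists_lamMin_eq hnpos G
    rw [hi]; exact graphEig_abs_le G i
  have hspr : spread H ≤ spread G := hext H
  have hnR : (200:ℝ) ≤ n := by exact_mod_cast hn
  have hmR : (n:ℝ) ≤ 3*(m:ℝ) + 2 := by exact_mod_cast hn3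
  have habs1 : lamMax G ≤ (n:ℝ) - 1 := (abs_le.mp hmaxG).2
  have habs2 : -((n:ℝ) - 1) ≤ lamMin G := (abs_le.mp hminG).1
  have hsprH : (112*(m:ℝ) - 32)/41 + (112*(m:ℝ) + 32)/153 ≤ spread H := by
    unfold spread
    linarith
  -- key eigenvalue magnitude bounds
  have hmaxBig : (n:ℝ)/10 ≤ lamMax G := by
    have : spread G = lamMax G - lamMin G := rfl
    linarith
  have hminBig : lamMin G ≤ -((n:ℝ)/10) := by
    have : spread G = lamMax G - lamMin G := rfl
    linarith
  constructor
  · exact entry_bound G (lamMax G) x hx heigx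
      (le_trans hmaxBig (le_abs_self _)) hnpos u
  · exact entry_bound G (lamMin G) z hz heigz
      (le_trans (by linarith : (n:ℝ)/10 ≤ -(lamMin G)) (neg_le_abs _)) hnpos u
end

section
/- Let W₁, W₂ be graphons and let α₁, α₂ > 0 with α₁ + α₂ = 1. Define W : [0,1]² → [0,1] by W(x,y) := W₁(x/α₁, y/α₁) if x, y ∈ [0,α₁], W(x,y) := W₂((x−α₁)/α₂, (y−α₁)/α₂) if x, y ∈ (α₁,1], and W(x,y) := 0 otherwise. Then W is a graphon and spr(W) ≤ α₁·spr(W₁) + α₂·spr(W₂); moreover, if neither W₁ nor W₂ is zero almost everywhere, the inequality is strict. -/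
open MeasureTheory

/-- Lebesgue measure restricted to the unit square `[0,1]²`. -/
noncomputable def unitSq : Measure (ℝ × ℝ) :=
  volume.restrict (Set.Icc (0 : ℝ) 1 ×ˢ Set.Icc (0 : ℝ) 1)

/-- Lebesgue measure restricted to the unit interval `[0,1]`. -/
noncomputable def unitInt : Measure ℝ := volume.restrict (Set.Icc (0 : ℝ) 1)

/-- A graphon: a measurable function with values in `[0,1]` which is symmetric
almost everywhere on `[0,1]²`. -/
def IsGraphon (W : ℝ → ℝ → ℝ) : Prop :=
  Measurable (Function.uncurry W) ∧ (∀ x y, W x y ∈ Set.Icc (0 : ℝ) 1) ∧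
    (∀ᵐ p : ℝ × ℝ ∂unitSq, W p.1 p.2 = W p.2 p.1)

/-- A unit function of `L²[0,1]`: measurable with `∫₀¹ f² = 1`. -/
def IsUnitL2 (f : ℝ → ℝ) : Prop :=
  Measurable f ∧ (∫ x in Set.Icc (0 : ℝ) 1, (f x) ^ 2) = 1

/-- The quadratic form `∫₀¹∫₀¹ W(x,y) f(x) f(y) dx dy`. -/
noncomputable def quadForm (W : ℝ → ℝ → ℝ) (f : ℝ → ℝ) : ℝ :=
  ∫ x in Set.Icc (0 : ℝ) 1, ∫ y in Set.Icc (0 : ℝ) 1, W x y * f x * f y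

/-- `μ(W)`, the maximum eigenvalue of the kernel operator associated to `W`. -/
noncomputable def graphonMu (W : ℝ → ℝ → ℝ) : ℝ :=
  sSup {r : ℝ | ∃ f : ℝ → ℝ, IsUnitL2 f ∧ r = quadForm W f}

/-- `ν(W)`, the minimum eigenvalue of the kernel operator associated to `W`. -/
noncomputable def graphonNu (W : ℝ → ℝ → ℝ) : ℝ :=
  sInf {r : ℝ | ∃ f : ℝ → ℝ, IsUnitL2 f ∧ r = quadForm W f}

/-- The spread `spr(W) = μ(W) − ν(W)` of a graphon. -/
noncomputable def graphonSpr (W : ℝ → ℝ → ℝ) : ℝ := graphonMu W - graphonNu W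

/-- `f` is a `lam`-eigenfunction of the kernel operator of `W`. -/
def IsEigenfunction (W : ℝ → ℝ → ℝ) (lam : ℝ) (f : ℝ → ℝ) : Prop :=
  ∀ᵐ x ∂unitInt, (∫ y in Set.Icc (0 : ℝ) 1, W x y * f y) = lam * f x

namespace GraphonAux

notation "I01" => Set.Icc (0 : ℝ) 1

lemma integral_one_I01 : (∫ _x in I01, (1 : ℝ)) = 1 := by
  simp [Real.volume_Icc]

lemma unit_one : IsUnitL2 (fun _ => (1 : ℝ)) :=
  ⟨measurable_const, by simp [Real.volume_Icc]⟩

section Bounded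

variable {W : ℝ → ℝ → ℝ} {f : ℝ → ℝ}

lemma measurable_slice (hm : Measurable (Function.uncurry W)) (x : ℝ) : Measurable (W x) :=
  hm.comp measurable_prodMk_left

lemma abs_W_le (hb : ∀ x y, W x y ∈ Set.Icc (0 : ℝ) 1) (x y : ℝ) : |W x y| ≤ 1 :=
  abs_le.mpr ⟨by linarith [(hb x y).1], (hb x y).2⟩

lemma sq_integrable (hf : IsUnitL2 f) : IntegrableOn (fun x => f x ^ 2) I01 := by
  by_contra h
  have h2 := hf.2
  rw [integral_undef h] at h2
  norm_num at h2

lemma abs_le_half (a : ℝ) : |a| ≤ (a ^ 2 + 1) / 2 := by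
  nlinarith [sq_nonneg (|a| - 1), sq_abs a]

lemma f_integrable (hf : IsUnitL2 f) : IntegrableOn f I01 := by
  refine Integrable.mono' (g := fun x => (f x ^ 2 + 1) / 2) ?_ ?_ ?_
  · exact ((sq_integrable hf).add (integrable_const 1)).div_const 2
  · exact hf.1.aestronglyMeasurable
  · exact Filter.Eventually.of_forall fun x => abs_le_half (f x)

lemma abs_f_integral_le (hf : IsUnitL2 f) : (∫ x in I01, |f x|) ≤ 1 := by
  have h1 : (∫ x in I01, |f x|) ≤ ∫ x in I01, (f x ^ 2 + 1) / 2 :=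
    integral_mono_of_nonneg (Filter.Eventually.of_forall fun x => abs_nonneg _)
      (((sq_integrable hf).add (integrable_const 1)).div_const 2)
      (Filter.Eventually.of_forall fun x => abs_le_half (f x))
  have h2 : (∫ x in I01, (f x ^ 2 + 1) / 2) = 1 := by
    rw [integral_div, integral_add (sq_integrable hf) (integrable_const 1), hf.2,
      integral_one_I01]
    norm_num
  linarith

lemma abs_f_integral_nonneg : 0 ≤ ∫ x in I01, |f x| :=
  setIntegral_nonneg measurableSet_Icc fun x _ => abs_nonneg _

lemma integrand_abs_le (hb : ∀ x y, W x y ∈ Set.Icc (0 : ℝ) 1) (x y : ℝ) :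
    |W x y * f x * f y| ≤ |f x| * |f y| := by
  rw [abs_mul, abs_mul]
  have h := abs_W_le hb x y
  have h2 := mul_le_mul_of_nonneg_right
    (mul_le_mul_of_nonneg_right h (abs_nonneg (f x))) (abs_nonneg (f y))
  simpa [one_mul] using h2

lemma inner_integrable (hm : Measurable (Function.uncurry W))
    (hb : ∀ x y, W x y ∈ Set.Icc (0 : ℝ) 1) (hf : IsUnitL2 f) (x : ℝ) :
    IntegrableOn (fun y => W x y * f x * f y) I01 := by
  refine Integrable.mono' (g := fun y => |f x| * |f y|) ?_ ?_ ?_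
  · exact ((f_integrable hf).abs.const_mul _)
  · exact (((measurable_slice hm x).mul_const (f x)).mul hf.1).aestronglyMeasurable
  · exact Filter.Eventually.of_forall fun y => integrand_abs_le hb x y

lemma inner_abs_le (hb : ∀ x y, W x y ∈ Set.Icc (0 : ℝ) 1) (hf : IsUnitL2 f) (x : ℝ) :
    |∫ y in I01, W x y * f x * f y| ≤ |f x| * ∫ y in I01, |f y| := by
  have step1 : |∫ y in I01, W x y * f x * f y| ≤ ∫ y in I01, |W x y * f x * f y| := by
    simpa only [Real.norm_eq_abs] using
      norm_integral_le_integral_norm (μ := volume.restrict I01) (fun y => W x y * f x * f y)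
  have step2 : (∫ y in I01, |W x y * f x * f y|) ≤ ∫ y in I01, |f x| * |f y| :=
    integral_mono_of_nonneg (Filter.Eventually.of_forall fun y => abs_nonneg _)
      ((f_integrable hf).abs.const_mul _)
      (Filter.Eventually.of_forall fun y => integrand_abs_le hb x y)
  have step3 : (∫ y in I01, |f x| * |f y|) = |f x| * ∫ y in I01, |f y| :=
    integral_const_mul _ _
  linarith

lemma outer_sm (hm : Measurable (Function.uncurry W)) (hf : IsUnitL2 f) :
    StronglyMeasurable (fun x => ∫ y in I01, W x y * f x * f y) := by
  have h : Measurable (fun p : ℝ × ℝ => W p.1 p.2 * f p.1 * f p.2) :=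
    (hm.mul (hf.1.comp measurable_fst)).mul (hf.1.comp measurable_snd)
  exact h.stronglyMeasurable.integral_prod_right'

lemma outer_integrable (hm : Measurable (Function.uncurry W))
    (hb : ∀ x y, W x y ∈ Set.Icc (0 : ℝ) 1) (hf : IsUnitL2 f) :
    IntegrableOn (fun x => ∫ y in I01, W x y * f x * f y) I01 := by
  refine Integrable.mono' (g := fun x => |f x| * ∫ y in I01, |f y|) ?_ ?_ ?_
  · exact ((f_integrable hf).abs.mul_const _)
  · exact (outer_sm hm hf).aestronglyMeasurable
  · exact Filter.Eventually.of_forall fun x => inner_abs_le hb hf x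

lemma quadForm_abs_le (hm : Measurable (Function.uncurry W))
    (hb : ∀ x y, W x y ∈ Set.Icc (0 : ℝ) 1) (hf : IsUnitL2 f) : |quadForm W f| ≤ 1 := by
  set C := ∫ y in I01, |f y| with hC
  have hC1 : C ≤ 1 := abs_f_integral_le hf
  have hC0 : 0 ≤ C := abs_f_integral_nonneg
  have step1 : |quadForm W f| ≤ ∫ x in I01, |∫ y in I01, W x y * f x * f y| := by
    simpa only [Real.norm_eq_abs, quadForm] using
      norm_integral_le_integral_norm (μ := volume.restrict I01)
        (fun x => ∫ y in I01, W x y * f x * f y)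
  have step2 : (∫ x in I01, |∫ y in I01, W x y * f x * f y|) ≤ ∫ x in I01, |f x| * C :=
    integral_mono_of_nonneg (Filter.Eventually.of_forall fun x => abs_nonneg _)
      ((f_integrable hf).abs.mul_const _)
      (Filter.Eventually.of_forall fun x => inner_abs_le hb hf x)
  have step3 : (∫ x in I01, |f x| * C) = C * C := integral_mul_const _ _
  nlinarith

end Bounded

end GraphonAux

namespace GraphonAux

variable {W : ℝ → ℝ → ℝ}

/-- The set of quadratic form values over unit functions. -/
def qset (W : ℝ → ℝ → ℝ) : Set ℝ := {r : ℝ | ∃ f : ℝ → ℝ, IsUnitL2 f ∧ r = quadForm W f}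

lemma qset_nonempty : (qset W).Nonempty :=
  ⟨quadForm W (fun _ => 1), ⟨_, unit_one, rfl⟩⟩

lemma qset_subset (hm : Measurable (Function.uncurry W))
    (hb : ∀ x y, W x y ∈ Set.Icc (0 : ℝ) 1) : qset W ⊆ Set.Icc (-1) 1 := by
  rintro r ⟨f, hf, rfl⟩
  exact abs_le.mp (quadForm_abs_le hm hb hf)

lemma qset_bddAbove (hm : Measurable (Function.uncurry W))
    (hb : ∀ x y, W x y ∈ Set.Icc (0 : ℝ) 1) : BddAbove (qset W) :=
  ⟨1, fun _ hr => (qset_subset hm hb hr).2⟩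

lemma qset_bddBelow (hm : Measurable (Function.uncurry W))
    (hb : ∀ x y, W x y ∈ Set.Icc (0 : ℝ) 1) : BddBelow (qset W) :=
  ⟨-1, fun _ hr => (qset_subset hm hb hr).1⟩

lemma quadForm_nonneg_of_nonneg (hb : ∀ x y, W x y ∈ Set.Icc (0 : ℝ) 1)
    {f : ℝ → ℝ} (hfpos : ∀ x, 0 ≤ f x) : 0 ≤ quadForm W f := by
  refine setIntegral_nonneg measurableSet_Icc fun x _ => ?_
  refine setIntegral_nonneg measurableSet_Icc fun y _ => ?_
  exact mul_nonneg (mul_nonneg (hb x y).1 (hfpos x)) (hfpos y)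

lemma le_mu (hm : Measurable (Function.uncurry W))
    (hb : ∀ x y, W x y ∈ Set.Icc (0 : ℝ) 1) {f : ℝ → ℝ} (hf : IsUnitL2 f) :
    quadForm W f ≤ graphonMu W :=
  le_csSup (qset_bddAbove hm hb) ⟨f, hf, rfl⟩

lemma nu_le (hm : Measurable (Function.uncurry W))
    (hb : ∀ x y, W x y ∈ Set.Icc (0 : ℝ) 1) {f : ℝ → ℝ} (hf : IsUnitL2 f) :
    graphonNu W ≤ quadForm W f :=
  csInf_le (qset_bddBelow hm hb) ⟨f, hf, rfl⟩

lemma mu_nonneg (hm : Measurable (Function.uncurry W))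
    (hb : ∀ x y, W x y ∈ Set.Icc (0 : ℝ) 1) : 0 ≤ graphonMu W :=
  le_trans (quadForm_nonneg_of_nonneg hb fun _ => zero_le_one) (le_mu hm hb unit_one)

lemma nu_le_mu (hm : Measurable (Function.uncurry W))
    (hb : ∀ x y, W x y ∈ Set.Icc (0 : ℝ) 1) : graphonNu W ≤ graphonMu W :=
  le_trans (nu_le hm hb unit_one) (le_mu hm hb unit_one)

lemma spr_nonneg (hm : Measurable (Function.uncurry W))
    (hb : ∀ x y, W x y ∈ Set.Icc (0 : ℝ) 1) : 0 ≤ graphonSpr W :=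
  sub_nonneg.mpr (nu_le_mu hm hb)

/-- The concentrated bump function showing `ν(W) ≤ ε`. -/
lemma nu_le_eps (hm : Measurable (Function.uncurry W))
    (hb : ∀ x y, W x y ∈ Set.Icc (0 : ℝ) 1) {ε : ℝ} (hε : 0 < ε) (hε1 : ε ≤ 1) :
    graphonNu W ≤ ε := by
  set c : ℝ := (Real.sqrt ε)⁻¹ with hc
  have hsqrt_pos : 0 < Real.sqrt ε := Real.sqrt_pos.mpr hε
  have hcpos : 0 < c := inv_pos.mpr hsqrt_pos
  set f : ℝ → ℝ := fun x => if x ∈ Set.Icc (0:ℝ) ε then c else 0 with hfdef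
  have hmeas : Measurable f := Measurable.ite measurableSet_Icc measurable_const measurable_const
  have hfpos : ∀ x, 0 ≤ f x := by
    intro x
    by_cases h : x ∈ Set.Icc (0:ℝ) ε
    · simp only [hfdef]; rw [if_pos h]; exact hcpos.le
    · simp only [hfdef]; rw [if_neg h]
  have hfle : ∀ x, f x ≤ c := by
    intro x
    by_cases h : x ∈ Set.Icc (0:ℝ) ε
    · simp only [hfdef]; rw [if_pos h]
    · simp only [hfdef]; rw [if_neg h]; exact hcpos.le
  have hIcap : I01 ∩ Set.Icc (0:ℝ) ε = Set.Icc (0:ℝ) ε :=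
    Set.inter_eq_self_of_subset_right (Set.Icc_subset_Icc_right hε1)
  have hvol : ((volume (Set.Icc (0:ℝ) ε)).toReal : ℝ) = ε := by
    simp [Real.volume_Icc, hε.le]
  -- integral of f over I01
  have hIf : (∫ x in I01, f x) = Real.sqrt ε := by
    have : (fun x => f x) = Set.indicator (Set.Icc (0:ℝ) ε) (fun _ => c) := by
      funext x
      rw [Set.indicator_apply]
    rw [this, setIntegral_indicator measurableSet_Icc, hIcap, setIntegral_const, measureReal_def, hvol]
    rw [smul_eq_mul, hc]
    rw [show ε = Real.sqrt ε * Real.sqrt ε from (Real.mul_self_sqrt hε.le).symm]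
    field_simp
    rw [Real.sqrt_sq hsqrt_pos.le]
  -- f is a unit vector
  have hunit : IsUnitL2 f := by
    refine ⟨hmeas, ?_⟩
    have : (fun x => f x ^ 2) = Set.indicator (Set.Icc (0:ℝ) ε) (fun _ => ε⁻¹) := by
      funext x
      rw [Set.indicator_apply]
      simp only [hfdef]
      split_ifs
      · rw [hc, inv_pow, Real.sq_sqrt hε.le]
      · norm_num
    rw [this, setIntegral_indicator measurableSet_Icc, hIcap, setIntegral_const, measureReal_def, hvol,
      smul_eq_mul]
    field_simp
  -- f is integrable on I01
  have hfint : IntegrableOn f I01 := by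
    refine Integrable.mono' (integrable_const c) hmeas.aestronglyMeasurable ?_
    exact Filter.Eventually.of_forall fun x => by
      rw [Real.norm_eq_abs, abs_of_nonneg (hfpos x)]; exact hfle x
  -- bound the quadratic form
  have hinner : ∀ x, (∫ y in I01, W x y * f x * f y) ≤ f x * Real.sqrt ε := by
    intro x
    have h1 : (∫ y in I01, W x y * f x * f y) ≤ ∫ y in I01, f x * f y := by
      refine integral_mono_of_nonneg
        (Filter.Eventually.of_forall fun y =>
          mul_nonneg (mul_nonneg (hb x y).1 (hfpos x)) (hfpos y))
        (hfint.const_mul _)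
        (Filter.Eventually.of_forall fun y => ?_)
      have h2 := (hb x y).2
      dsimp only
      nlinarith [mul_nonneg (hfpos x) (hfpos y), mul_nonneg (sub_nonneg.mpr h2)
        (mul_nonneg (hfpos x) (hfpos y))]
    rw [integral_const_mul, hIf] at h1
    exact h1
  have houter : quadForm W f ≤ Real.sqrt ε * Real.sqrt ε := by
    have h1 : quadForm W f ≤ ∫ x in I01, f x * Real.sqrt ε := by
      refine integral_mono_of_nonneg
        (Filter.Eventually.of_forall fun x =>
          setIntegral_nonneg measurableSet_Icc fun y _ =>
            mul_nonneg (mul_nonneg (hb x y).1 (hfpos x)) (hfpos y))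
        (hfint.mul_const _)
        (Filter.Eventually.of_forall fun x => hinner x)
    rw [integral_mul_const, hIf] at h1
    exact h1
  rw [Real.mul_self_sqrt hε.le] at houter
  exact le_trans (nu_le hm hb hunit) houter

lemma nu_nonpos (hm : Measurable (Function.uncurry W))
    (hb : ∀ x y, W x y ∈ Set.Icc (0 : ℝ) 1) : graphonNu W ≤ 0 := by
  by_contra h
  push_neg at h
  have hε : 0 < min (graphonNu W / 2) 1 := lt_min (by linarith) one_pos
  have h2 := nu_le_eps hm hb hε (min_le_right _ _)
  have h3 : min (graphonNu W / 2) 1 ≤ graphonNu W / 2 := min_le_left _ _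
  linarith

lemma quadForm_one_eq (hm : Measurable (Function.uncurry W))
    (hb : ∀ x y, W x y ∈ Set.Icc (0 : ℝ) 1) :
    quadForm W (fun _ => 1) = ∫ p : ℝ × ℝ, W p.1 p.2 ∂unitSq := by
  have hprod : unitSq = (volume.restrict I01).prod (volume.restrict I01) := by
    rw [Measure.prod_restrict, unitSq, ← Measure.volume_eq_prod]
  have hint : Integrable (fun p : ℝ × ℝ => W p.1 p.2)
      ((volume.restrict I01).prod (volume.restrict I01)) := by
    refine Integrable.mono' (integrable_const 1) hm.aestronglyMeasurable ?_
    exact Filter.Eventually.of_forall fun p => by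
      rw [Real.norm_eq_abs]; exact abs_W_le hb p.1 p.2
  rw [hprod, integral_prod _ hint, quadForm]
  simp only [mul_one]

instance : IsFiniteMeasure unitSq := by
  constructor
  rw [unitSq, Measure.restrict_apply_univ, Measure.volume_eq_prod, Measure.prod_prod]
  simp [Real.volume_Icc]

lemma mu_pos (hm : Measurable (Function.uncurry W))
    (hb : ∀ x y, W x y ∈ Set.Icc (0 : ℝ) 1)
    (hne : ¬(∀ᵐ p : ℝ × ℝ ∂unitSq, W p.1 p.2 = 0)) : 0 < graphonMu W := by
  have hint : Integrable (fun p : ℝ × ℝ => W p.1 p.2) unitSq := by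
    refine Integrable.mono' (integrable_const 1) ?_ ?_
    · exact hm.aestronglyMeasurable
    · exact Filter.Eventually.of_forall fun p => by
        rw [Real.norm_eq_abs]; exact abs_W_le hb p.1 p.2
  have h0 : 0 ≤ ∫ p : ℝ × ℝ, W p.1 p.2 ∂unitSq :=
    integral_nonneg fun p => (hb p.1 p.2).1
  have hne0 : (∫ p : ℝ × ℝ, W p.1 p.2 ∂unitSq) ≠ 0 := by
    intro hzero
    have hae := (integral_eq_zero_iff_of_nonneg
      (fun p : ℝ × ℝ => (hb p.1 p.2).1) hint).mp hzero
    exact hne (by filter_upwards [hae] with p hp using hp)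
  have hpos : 0 < ∫ p : ℝ × ℝ, W p.1 p.2 ∂unitSq := lt_of_le_of_ne h0 (Ne.symm hne0)
  calc 0 < ∫ p : ℝ × ℝ, W p.1 p.2 ∂unitSq := hpos
    _ = quadForm W (fun _ => 1) := (quadForm_one_eq hm hb).symm
    _ ≤ graphonMu W := le_mu hm hb unit_one

end GraphonAux

namespace GraphonAux

lemma scale_interval {a : ℝ} (ha : 0 < a) (d : ℝ) (g : ℝ → ℝ) :
    (∫ x in Set.Ioc d (a + d), g x) = a * ∫ u in I01, g (a * u + d) := by
  have h := intervalIntegral.smul_integral_comp_mul_add g a d (a := 0) (b := 1)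
  rw [mul_zero, zero_add, mul_one] at h
  rw [← intervalIntegral.integral_of_le (by linarith : d ≤ a + d)]
  rw [integral_Icc_eq_integral_Ioc, ← intervalIntegral.integral_of_le zero_le_one]
  rw [← h, smul_eq_mul]

lemma scaleA {α : ℝ} (hα : 0 < α) (g : ℝ → ℝ) :
    (∫ x in Set.Icc 0 α, g x) = α * ∫ u in I01, g (α * u + 0) := by
  rw [integral_Icc_eq_integral_Ioc]
  have h := scale_interval hα 0 g
  rw [add_zero] at h
  exact h

lemma scaleB {α₁ α₂ : ℝ} (hα₂ : 0 < α₂) (hsum : α₁ + α₂ = 1) (g : ℝ → ℝ) :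
    (∫ x in Set.Ioc α₁ 1, g x) = α₂ * ∫ u in I01, g (α₂ * u + α₁) := by
  have h := scale_interval hα₂ α₁ g
  rw [show α₂ + α₁ = 1 by linarith] at h
  exact h

lemma affine_measurable (a d : ℝ) : Measurable (fun u : ℝ => a * u + d) :=
  (measurable_id.const_mul a).add_const d

lemma block_bound {W' : ℝ → ℝ → ℝ} (hm' : Measurable (Function.uncurry W'))
    (hb' : ∀ x y, W' x y ∈ Set.Icc (0 : ℝ) 1)
    {f : ℝ → ℝ} (hmf : Measurable f)
    {S : Set ℝ} (hSm : MeasurableSet S)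
    {a d : ℝ} (ha : 0 < a)
    (hscale : ∀ g : ℝ → ℝ, (∫ x in S, g x) = a * ∫ u in I01, g (a * u + d))
    (hf2S : IntegrableOn (fun x => f x ^ 2) S)
    {T : ℝ}
    (hT : T = ∫ x in S, ∫ y in S, W' ((x - d) / a) ((y - d) / a) * f x * f y) :
    a * (∫ x in S, f x ^ 2) * graphonNu W' ≤ T ∧
      T ≤ a * (∫ x in S, f x ^ 2) * graphonMu W' := by
  have hψ : ∀ u : ℝ, (a * u + d - d) / a = u := fun u => by field_simp; ring
  set t := ∫ x in S, f x ^ 2 with htdef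
  have ht0 : 0 ≤ t := setIntegral_nonneg hSm fun x _ => sq_nonneg _
  by_cases htz : t = 0
  · -- the block contributes nothing
    have hae : ∀ᵐ x ∂(volume.restrict S), f x = 0 := by
      have h := (integral_eq_zero_iff_of_nonneg
        (fun x => sq_nonneg (f x)) hf2S).mp htz
      filter_upwards [h] with x hx
      exact pow_eq_zero_iff two_ne_zero |>.mp hx
    have hT0 : T = 0 := by
      rw [hT]
      have hz : ∀ᵐ x ∂(volume.restrict S),
          (∫ y in S, W' ((x - d) / a) ((y - d) / a) * f x * f y) = 0 := by
        filter_upwards [hae] with x hx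
        simp only [hx, mul_zero, zero_mul, integral_zero]
      rw [integral_congr_ae hz, integral_zero]
    rw [hT0, htz]
    norm_num
  · have htpos : 0 < t := lt_of_le_of_ne ht0 (Ne.symm htz)
    set g' : ℝ → ℝ := fun u => f (a * u + d) with hg'def
    -- T = a * (a * quadForm W' g')
    have hinner : ∀ u : ℝ,
        (∫ y in S, W' ((a * u + d - d) / a) ((y - d) / a) * f (a * u + d) * f y)
          = a * ∫ v in I01, W' u v * g' u * g' v := by
      intro u
      rw [hψ u]
      rw [hscale (fun y => W' u ((y - d) / a) * f (a * u + d) * f y)]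
      congr 1
      refine integral_congr_ae (Filter.Eventually.of_forall fun v => ?_)
      simp only [hψ v]
      rfl
    have hTv : T = a * (a * quadForm W' g') := by
      rw [hT, hscale (fun x => ∫ y in S, W' ((x - d) / a) ((y - d) / a) * f x * f y)]
      congr 1
      rw [show quadForm W' g' = ∫ u in I01, ∫ v in I01, W' u v * g' u * g' v from rfl]
      rw [← integral_const_mul]
      refine integral_congr_ae (Filter.Eventually.of_forall fun u => ?_)
      exact hinner u
    have hg'sq : (∫ u in I01, g' u ^ 2) = t / a := by
      have h := hscale (fun x => f x ^ 2)
      rw [eq_div_iff ha.ne']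
      rw [htdef, h]
      ring
    set s : ℝ := Real.sqrt (a / t) with hsdef
    have hs2 : s ^ 2 = a / t := Real.sq_sqrt (by positivity)
    set g₁ : ℝ → ℝ := fun u => s * g' u with hg₁def
    have hg₁m : Measurable g₁ :=
      ((hmf.comp (affine_measurable a d)).const_mul s)
    have hg₁unit : IsUnitL2 g₁ := by
      refine ⟨hg₁m, ?_⟩
      have heq : ∀ u, g₁ u ^ 2 = (a / t) * g' u ^ 2 := fun u => by
        simp only [hg₁def]
        rw [mul_pow, hs2]
      calc (∫ u in I01, g₁ u ^ 2) = ∫ u in I01, (a / t) * g' u ^ 2 :=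
            integral_congr_ae (Filter.Eventually.of_forall fun u => heq u)
        _ = (a / t) * ∫ u in I01, g' u ^ 2 := integral_const_mul _ _
        _ = (a / t) * (t / a) := by rw [hg'sq]
        _ = 1 := by field_simp
    have hq : quadForm W' g₁ = (a / t) * quadForm W' g' := by
      rw [show quadForm W' g₁ = ∫ u in I01, ∫ v in I01, W' u v * g₁ u * g₁ v from rfl]
      rw [show quadForm W' g' = ∫ u in I01, ∫ v in I01, W' u v * g' u * g' v from rfl]
      rw [← integral_const_mul]
      refine integral_congr_ae (Filter.Eventually.of_forall fun u => ?_)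
      have hinner2 : ∀ v, W' u v * g₁ u * g₁ v = (a / t) * (W' u v * g' u * g' v) := by
        intro v
        simp only [hg₁def]
        have hss : s * s = a / t := by rw [← pow_two]; exact hs2
        rw [← hss]; ring
      calc (∫ v in I01, W' u v * g₁ u * g₁ v)
          = ∫ v in I01, (a / t) * (W' u v * g' u * g' v) :=
            integral_congr_ae (Filter.Eventually.of_forall fun v => hinner2 v)
        _ = (a / t) * ∫ v in I01, W' u v * g' u * g' v := integral_const_mul _ _
    have hTfinal : T = a * t * quadForm W' g₁ := by
      rw [hTv, hq]
      field_simp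
    have hat : 0 ≤ a * t := mul_nonneg ha.le ht0
    constructor
    · rw [hTfinal]
      calc a * t * graphonNu W' ≤ a * t * quadForm W' g₁ :=
            mul_le_mul_of_nonneg_left (nu_le hm' hb' hg₁unit) hat
        _ = a * t * quadForm W' g₁ := rfl
    · rw [hTfinal]
      exact mul_le_mul_of_nonneg_left (le_mu hm' hb' hg₁unit) hat

end GraphonAux

namespace GraphonAux

lemma affine_preimage_null {s : Set ℝ} (hs : volume s = 0) {a : ℝ} (ha : a ≠ 0) (b : ℝ) :
    volume ((fun x : ℝ => a * x + b) ⁻¹' s) = 0 := by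
  have h1 : volume ((fun y : ℝ => y + b) ⁻¹' s) = 0 := by
    rw [show (fun y : ℝ => y + b) = (· + b) from rfl, measure_preimage_add_right]
    exact hs
  obtain ⟨t, hsub, htm, ht0⟩ := exists_measurable_superset_of_null h1
  have hkey : volume ((fun x : ℝ => a * x) ⁻¹' t) = 0 := by
    have hmap := Measure.map_apply (measurable_const_mul a) htm (μ := (volume : Measure ℝ))
    rw [Real.map_volume_mul_left ha] at hmap
    rw [← hmap]
    simp [ht0]
  refine measure_mono_null ?_ hkey
  intro x hx
  exact hsub hx

lemma affine_preimage_null₂ {N : Set (ℝ × ℝ)} (hN : volume N = 0) {a : ℝ} (ha : a ≠ 0)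
    (b : ℝ) :
    volume ((fun p : ℝ × ℝ => (a * p.1 + b, a * p.2 + b)) ⁻¹' N) = 0 := by
  obtain ⟨t, hsub, htm, ht0⟩ := exists_measurable_superset_of_null hN
  set m : ℝ → ℝ := fun x => a * x + b with hmdef
  have hmm : Measurable m := (measurable_const_mul a).add_const b
  refine measure_mono_null (Set.preimage_mono hsub) ?_
  have hTm : Measurable (fun p : ℝ × ℝ => (m p.1, m p.2)) :=
    (hmm.comp measurable_fst).prodMk (hmm.comp measurable_snd)
  rw [Measure.volume_eq_prod] at ht0 ⊢
  rw [Measure.measure_prod_null (hTm htm)]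
  have hslice := (Measure.measure_prod_null htm).mp ht0
  -- the set of x with non-null slice of t is null
  have hZ : volume {x : ℝ | volume (Prod.mk x ⁻¹' t) ≠ 0} = 0 := by
    have h' : ∀ᵐ x : ℝ, volume (Prod.mk x ⁻¹' t) = 0 := by
      filter_upwards [hslice] with x hx
      simpa using hx
    have := ae_iff.mp h'
    simpa [ne_eq] using this
  have hmZ : volume (m ⁻¹' {x : ℝ | volume (Prod.mk x ⁻¹' t) ≠ 0}) = 0 :=
    affine_preimage_null hZ ha b
  have hae : ∀ᵐ x : ℝ, volume (Prod.mk (m x) ⁻¹' t) = 0 := by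
    rw [ae_iff]
    exact hmZ
  filter_upwards [hae] with x hx
  have hset : Prod.mk x ⁻¹' ((fun p : ℝ × ℝ => (m p.1, m p.2)) ⁻¹' t)
      = m ⁻¹' (Prod.mk (m x) ⁻¹' t) := rfl
  rw [hset]
  exact affine_preimage_null hx ha b

end GraphonAux

namespace GraphonAux

section Decomp

variable {W W₁ W₂ : ℝ → ℝ → ℝ} {α₁ α₂ : ℝ} {f : ℝ → ℝ}

lemma inner_sub_abs_le (hb : ∀ x y, W x y ∈ Set.Icc (0 : ℝ) 1) (hf : IsUnitL2 f)
    {S : Set ℝ} (hS : S ⊆ I01) (x : ℝ) :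
    |∫ y in S, W x y * f x * f y| ≤ |f x| * ∫ y in I01, |f y| := by
  have step1 : |∫ y in S, W x y * f x * f y| ≤ ∫ y in S, |W x y * f x * f y| := by
    simpa only [Real.norm_eq_abs] using
      norm_integral_le_integral_norm (μ := volume.restrict S) (fun y => W x y * f x * f y)
  have step2 : (∫ y in S, |W x y * f x * f y|) ≤ ∫ y in S, |f x| * |f y| :=
    integral_mono_of_nonneg (Filter.Eventually.of_forall fun y => abs_nonneg _)
      (((f_integrable hf).mono_set hS).abs.const_mul _)
      (Filter.Eventually.of_forall fun y => integrand_abs_le hb x y)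
  have step3 : (∫ y in S, |f x| * |f y|) = |f x| * ∫ y in S, |f y| := integral_const_mul _ _
  have step4 : (∫ y in S, |f y|) ≤ ∫ y in I01, |f y| :=
    setIntegral_mono_set (f_integrable hf).abs
      (Filter.Eventually.of_forall fun y => abs_nonneg _)
      (HasSubset.Subset.eventuallyLE hS)
  have step5 := mul_le_mul_of_nonneg_left step4 (abs_nonneg (f x))
  linarith

lemma outer_sub_sm (hm : Measurable (Function.uncurry W)) (hf : IsUnitL2 f) (S : Set ℝ) :
    StronglyMeasurable (fun x => ∫ y in S, W x y * f x * f y) := by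
  have h : Measurable (fun p : ℝ × ℝ => W p.1 p.2 * f p.1 * f p.2) :=
    (hm.mul (hf.1.comp measurable_fst)).mul (hf.1.comp measurable_snd)
  exact h.stronglyMeasurable.integral_prod_right'

lemma outer_sub_integrable (hm : Measurable (Function.uncurry W))
    (hb : ∀ x y, W x y ∈ Set.Icc (0 : ℝ) 1) (hf : IsUnitL2 f)
    {S S' : Set ℝ} (hS : S ⊆ I01) (hS' : S' ⊆ I01) :
    IntegrableOn (fun x => ∫ y in S, W x y * f x * f y) S' := by
  refine Integrable.mono' (g := fun x => |f x| * ∫ y in I01, |f y|) ?_ ?_ ?_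
  · exact ((f_integrable hf).mono_set hS').abs.mul_const _
  · exact (outer_sub_sm hm hf S).aestronglyMeasurable
  · exact Filter.Eventually.of_forall fun x => inner_sub_abs_le hb hf hS x

lemma quad_decomp (hm : Measurable (Function.uncurry W))
    (hb : ∀ x y, W x y ∈ Set.Icc (0 : ℝ) 1) (hf : IsUnitL2 f)
    (hα₁ : 0 < α₁) (hα₂ : 0 < α₂) (hsum : α₁ + α₂ = 1)
    (hWc : ∀ x y : ℝ, ¬(x ∈ Set.Icc (0 : ℝ) α₁ ∧ y ∈ Set.Icc (0 : ℝ) α₁) →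
      ¬(x ∈ Set.Ioc α₁ (1 : ℝ) ∧ y ∈ Set.Ioc α₁ (1 : ℝ)) → W x y = 0) :
    quadForm W f
      = (∫ x in Set.Icc (0:ℝ) α₁, ∫ y in Set.Icc (0:ℝ) α₁, W x y * f x * f y)
        + ∫ x in Set.Ioc α₁ (1:ℝ), ∫ y in Set.Ioc α₁ (1:ℝ), W x y * f x * f y := by
  have hα₁1 : α₁ ≤ 1 := by linarith
  have hABu : Set.Icc (0:ℝ) α₁ ∪ Set.Ioc α₁ 1 = I01 :=
    Set.Icc_union_Ioc_eq_Icc hα₁.le hα₁1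
  have hdisj : Disjoint (Set.Icc (0:ℝ) α₁) (Set.Ioc α₁ 1) := by
    rw [Set.disjoint_left]
    intro x hx hx'
    exact absurd hx'.1 (not_lt.mpr hx.2)
  have hAsub : Set.Icc (0:ℝ) α₁ ⊆ I01 := Set.Icc_subset_Icc le_rfl hα₁1
  have hBsub : Set.Ioc α₁ (1:ℝ) ⊆ I01 := fun x hx => ⟨(hα₁.trans hx.1).le, hx.2⟩
  -- inner splitting
  have hinner_split : ∀ x : ℝ, (∫ y in I01, W x y * f x * f y)
      = (∫ y in Set.Icc (0:ℝ) α₁, W x y * f x * f y)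
        + ∫ y in Set.Ioc α₁ (1:ℝ), W x y * f x * f y := by
    intro x
    rw [← hABu, setIntegral_union hdisj measurableSet_Ioc
      ((inner_integrable hm hb hf x).mono_set hAsub)
      ((inner_integrable hm hb hf x).mono_set hBsub)]
  -- cross terms vanish
  have hcrossAB : ∀ x ∈ Set.Icc (0:ℝ) α₁,
      (∫ y in Set.Ioc α₁ (1:ℝ), W x y * f x * f y) = 0 := by
    intro x hx
    rw [setIntegral_congr_fun measurableSet_Ioc
      (g := fun _ => (0:ℝ)) (fun y hy => ?_), integral_zero]
    have hW0 : W x y = 0 := by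
      refine hWc x y (fun h => ?_) (fun h => ?_)
      · exact absurd h.2.2 (not_le.mpr hy.1)
      · exact absurd h.1.1 (not_lt.mpr hx.2)
    rw [hW0, zero_mul, zero_mul]
  have hcrossBA : ∀ x ∈ Set.Ioc α₁ (1:ℝ),
      (∫ y in Set.Icc (0:ℝ) α₁, W x y * f x * f y) = 0 := by
    intro x hx
    rw [setIntegral_congr_fun measurableSet_Icc
      (g := fun _ => (0:ℝ)) (fun y hy => ?_), integral_zero]
    have hW0 : W x y = 0 := by
      refine hWc x y (fun h => ?_) (fun h => ?_)
      · exact absurd h.1.2 (not_le.mpr hx.1)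
      · exact absurd h.2.1 (not_lt.mpr hy.2)
    rw [hW0, zero_mul, zero_mul]
  -- outer splitting
  have step1 : quadForm W f = ∫ x in I01,
      ((∫ y in Set.Icc (0:ℝ) α₁, W x y * f x * f y)
        + ∫ y in Set.Ioc α₁ (1:ℝ), W x y * f x * f y) :=
    integral_congr_ae (Filter.Eventually.of_forall hinner_split)
  have hIntA : IntegrableOn (fun x => (∫ y in Set.Icc (0:ℝ) α₁, W x y * f x * f y)
      + ∫ y in Set.Ioc α₁ (1:ℝ), W x y * f x * f y) (Set.Icc (0:ℝ) α₁) :=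
    (outer_sub_integrable hm hb hf hAsub hAsub).add
      (outer_sub_integrable hm hb hf hBsub hAsub)
  have hIntB : IntegrableOn (fun x => (∫ y in Set.Icc (0:ℝ) α₁, W x y * f x * f y)
      + ∫ y in Set.Ioc α₁ (1:ℝ), W x y * f x * f y) (Set.Ioc α₁ (1:ℝ)) :=
    (outer_sub_integrable hm hb hf hAsub hBsub).add
      (outer_sub_integrable hm hb hf hBsub hBsub)
  rw [step1, ← hABu, setIntegral_union hdisj measurableSet_Ioc hIntA hIntB]
  rw [integral_add (outer_sub_integrable hm hb hf hAsub hAsub)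
    (outer_sub_integrable hm hb hf hBsub hAsub)]
  rw [integral_add (outer_sub_integrable hm hb hf hAsub hBsub)
    (outer_sub_integrable hm hb hf hBsub hBsub)]
  rw [setIntegral_congr_fun measurableSet_Icc (g := fun _ => (0:ℝ))
    (fun x hx => hcrossAB x hx), integral_zero]
  rw [setIntegral_congr_fun measurableSet_Ioc (g := fun _ => (0:ℝ))
    (fun x hx => hcrossBA x hx), integral_zero]
  ring

lemma quad_bounds (h₁ : IsGraphon W₁) (h₂ : IsGraphon W₂)
    (hm : Measurable (Function.uncurry W)) (hb : ∀ x y, W x y ∈ Set.Icc (0 : ℝ) 1)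
    (hα₁ : 0 < α₁) (hα₂ : 0 < α₂) (hsum : α₁ + α₂ = 1)
    (hWa : ∀ x ∈ Set.Icc (0 : ℝ) α₁, ∀ y ∈ Set.Icc (0 : ℝ) α₁,
      W x y = W₁ (x / α₁) (y / α₁))
    (hWb : ∀ x ∈ Set.Ioc α₁ (1 : ℝ), ∀ y ∈ Set.Ioc α₁ (1 : ℝ),
      W x y = W₂ ((x - α₁) / α₂) ((y - α₁) / α₂))
    (hWc : ∀ x y : ℝ, ¬(x ∈ Set.Icc (0 : ℝ) α₁ ∧ y ∈ Set.Icc (0 : ℝ) α₁) →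
      ¬(x ∈ Set.Ioc α₁ (1 : ℝ) ∧ y ∈ Set.Ioc α₁ (1 : ℝ)) → W x y = 0)
    (hf : IsUnitL2 f) :
    ∃ t₁ t₂ : ℝ, 0 ≤ t₁ ∧ 0 ≤ t₂ ∧ t₁ + t₂ = 1 ∧
      α₁ * t₁ * graphonNu W₁ + α₂ * t₂ * graphonNu W₂ ≤ quadForm W f ∧
      quadForm W f ≤ α₁ * t₁ * graphonMu W₁ + α₂ * t₂ * graphonMu W₂ := by
  have hα₁1 : α₁ ≤ 1 := by linarith
  have hAsub : Set.Icc (0:ℝ) α₁ ⊆ I01 := Set.Icc_subset_Icc le_rfl hα₁1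
  have hBsub : Set.Ioc α₁ (1:ℝ) ⊆ I01 := fun x hx => ⟨(hα₁.trans hx.1).le, hx.2⟩
  have hABu : Set.Icc (0:ℝ) α₁ ∪ Set.Ioc α₁ 1 = I01 :=
    Set.Icc_union_Ioc_eq_Icc hα₁.le hα₁1
  have hdisj : Disjoint (Set.Icc (0:ℝ) α₁) (Set.Ioc α₁ 1) := by
    rw [Set.disjoint_left]
    intro x hx hx'
    exact absurd hx'.1 (not_lt.mpr hx.2)
  refine ⟨∫ x in Set.Icc (0:ℝ) α₁, f x ^ 2, ∫ x in Set.Ioc α₁ (1:ℝ), f x ^ 2,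
    setIntegral_nonneg measurableSet_Icc fun x _ => sq_nonneg _,
    setIntegral_nonneg measurableSet_Ioc fun x _ => sq_nonneg _, ?_, ?_, ?_⟩
  · rw [← setIntegral_union hdisj measurableSet_Ioc
      ((sq_integrable hf).mono_set hAsub) ((sq_integrable hf).mono_set hBsub), hABu]
    exact hf.2
  all_goals {
    have hTA : (∫ x in Set.Icc (0:ℝ) α₁, ∫ y in Set.Icc (0:ℝ) α₁, W x y * f x * f y)
        = ∫ x in Set.Icc (0:ℝ) α₁, ∫ y in Set.Icc (0:ℝ) α₁,
            W₁ ((x - 0) / α₁) ((y - 0) / α₁) * f x * f y := by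
      refine setIntegral_congr_fun measurableSet_Icc (fun x hx => ?_)
      refine setIntegral_congr_fun measurableSet_Icc (fun y hy => ?_)
      rw [hWa x hx y hy, sub_zero, sub_zero]
    have hTB : (∫ x in Set.Ioc α₁ (1:ℝ), ∫ y in Set.Ioc α₁ (1:ℝ), W x y * f x * f y)
        = ∫ x in Set.Ioc α₁ (1:ℝ), ∫ y in Set.Ioc α₁ (1:ℝ),
            W₂ ((x - α₁) / α₂) ((y - α₁) / α₂) * f x * f y := by
      refine setIntegral_congr_fun measurableSet_Ioc (fun x hx => ?_)
      refine setIntegral_congr_fun measurableSet_Ioc (fun y hy => ?_)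
      rw [hWb x hx y hy]
    have hblockA := block_bound h₁.1 h₁.2.1 hf.1 measurableSet_Icc hα₁
      (fun g => scaleA hα₁ g) ((sq_integrable hf).mono_set hAsub) hTA.symm.symm
    have hblockB := block_bound h₂.1 h₂.2.1 hf.1 measurableSet_Ioc hα₂
      (fun g => scaleB hα₂ hsum g) ((sq_integrable hf).mono_set hBsub) hTB.symm.symm
    have hsplit := quad_decomp hm hb hf hα₁ hα₂ hsum hWc
    rw [hsplit]
    first
      | linarith [hblockA.1, hblockB.1]
      | linarith [hblockA.2, hblockB.2]
  }

end Decomp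

end GraphonAux


open GraphonAux in
/-- The spread of a direct sum of two graphons is at most the weighted sum of their
spreads, with strict inequality if neither summand vanishes almost everywhere. -/
theorem graphon_direct_sum_spread (W₁ W₂ : ℝ → ℝ → ℝ)
    (h₁ : IsGraphon W₁) (h₂ : IsGraphon W₂)
    (α₁ α₂ : ℝ) (hα₁ : 0 < α₁) (hα₂ : 0 < α₂) (hsum : α₁ + α₂ = 1)
    (W : ℝ → ℝ → ℝ)
    (hWa : ∀ x ∈ Set.Icc (0 : ℝ) α₁, ∀ y ∈ Set.Icc (0 : ℝ) α₁,
      W x y = W₁ (x / α₁) (y / α₁))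
    (hWb : ∀ x ∈ Set.Ioc α₁ (1 : ℝ), ∀ y ∈ Set.Ioc α₁ (1 : ℝ),
      W x y = W₂ ((x - α₁) / α₂) ((y - α₁) / α₂))
    (hWc : ∀ x y : ℝ, ¬(x ∈ Set.Icc (0 : ℝ) α₁ ∧ y ∈ Set.Icc (0 : ℝ) α₁) →
      ¬(x ∈ Set.Ioc α₁ (1 : ℝ) ∧ y ∈ Set.Ioc α₁ (1 : ℝ)) → W x y = 0) :
    IsGraphon W ∧
    graphonSpr W ≤ α₁ * graphonSpr W₁ + α₂ * graphonSpr W₂ ∧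
    (¬(∀ᵐ p : ℝ × ℝ ∂unitSq, W₁ p.1 p.2 = 0) →
     ¬(∀ᵐ p : ℝ × ℝ ∂unitSq, W₂ p.1 p.2 = 0) →
     graphonSpr W < α₁ * graphonSpr W₁ + α₂ * graphonSpr W₂) := by
  have hα₁1 : α₁ ≤ 1 := by linarith
  -- measurability of W
  have hWfun : Function.uncurry W = fun p : ℝ × ℝ =>
      if p.1 ∈ Set.Icc (0:ℝ) α₁ ∧ p.2 ∈ Set.Icc (0:ℝ) α₁ then W₁ (p.1 / α₁) (p.2 / α₁)
      else if p.1 ∈ Set.Ioc α₁ (1:ℝ) ∧ p.2 ∈ Set.Ioc α₁ (1:ℝ) then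
        W₂ ((p.1 - α₁) / α₂) ((p.2 - α₁) / α₂)
      else 0 := by
    funext p
    rcases p with ⟨x, y⟩
    simp only [Function.uncurry]
    split_ifs with hc1 hc2
    · exact hWa x hc1.1 y hc1.2
    · exact hWb x hc2.1 y hc2.2
    · exact hWc x y hc1 hc2
  have hmW : Measurable (Function.uncurry W) := by
    rw [hWfun]
    refine Measurable.ite ?_ ?_ (Measurable.ite ?_ ?_ measurable_const)
    · exact (measurableSet_Icc.preimage measurable_fst).inter
        (measurableSet_Icc.preimage measurable_snd)
    · exact h₁.1.comp ((measurable_fst.div_const α₁).prodMk (measurable_snd.div_const α₁))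
    · exact (measurableSet_Ioc.preimage measurable_fst).inter
        (measurableSet_Ioc.preimage measurable_snd)
    · exact h₂.1.comp (((measurable_fst.sub_const α₁).div_const α₂).prodMk
        ((measurable_snd.sub_const α₁).div_const α₂))
  -- boundedness of W
  have hbW : ∀ x y, W x y ∈ Set.Icc (0:ℝ) 1 := by
    intro x y
    by_cases hc1 : x ∈ Set.Icc (0:ℝ) α₁ ∧ y ∈ Set.Icc (0:ℝ) α₁
    · rw [hWa x hc1.1 y hc1.2]; exact h₁.2.1 _ _
    by_cases hc2 : x ∈ Set.Ioc α₁ (1:ℝ) ∧ y ∈ Set.Ioc α₁ (1:ℝ)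
    · rw [hWb x hc2.1 y hc2.2]; exact h₂.2.1 _ _
    · rw [hWc x y hc1 hc2]; exact ⟨le_rfl, zero_le_one⟩
  -- symmetry of W almost everywhere
  have hsqm : MeasurableSet (Set.Icc (0:ℝ) 1 ×ˢ Set.Icc (0:ℝ) 1) :=
    measurableSet_Icc.prod measurableSet_Icc
  have hbadset : ∀ (V : ℝ → ℝ → ℝ), (∀ᵐ p : ℝ × ℝ ∂unitSq, V p.1 p.2 = V p.2 p.1) →
      volume {p : ℝ × ℝ | p ∈ Set.Icc (0:ℝ) 1 ×ˢ Set.Icc (0:ℝ) 1 ∧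
        V p.1 p.2 ≠ V p.2 p.1} = 0 := by
    intro V hV
    have h : ∀ᵐ p : ℝ × ℝ ∂(volume.restrict (Set.Icc (0:ℝ) 1 ×ˢ Set.Icc (0:ℝ) 1)),
        V p.1 p.2 = V p.2 p.1 := hV
    have h2 := ae_iff.mp ((ae_restrict_iff' hsqm).mp h)
    refine measure_mono_null (fun p hp => ?_) h2
    exact fun himp => hp.2 (himp hp.1)
  have hN₁ := hbadset W₁ h₁.2.2
  have hN₂ := hbadset W₂ h₂.2.2
  have hnull1 := affine_preimage_null₂ hN₁ (inv_ne_zero hα₁.ne') 0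
  have hnull2 := affine_preimage_null₂ hN₂ (inv_ne_zero hα₂.ne') (-(α₁/α₂))
  have hsym : ∀ᵐ p : ℝ × ℝ ∂unitSq, W p.1 p.2 = W p.2 p.1 := by
    have hmain : ∀ᵐ p : ℝ × ℝ ∂(volume : Measure (ℝ × ℝ)),
        p ∈ Set.Icc (0:ℝ) 1 ×ˢ Set.Icc (0:ℝ) 1 → W p.1 p.2 = W p.2 p.1 := by
      rw [ae_iff]
      refine measure_mono_null ?_ (measure_union_null hnull1 hnull2)
      rintro ⟨x, y⟩ hp
      rw [Set.mem_setOf_eq, Classical.not_imp] at hp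
      obtain ⟨hsq, hne⟩ := hp
      have hx : x ∈ Set.Icc (0:ℝ) 1 := hsq.1
      have hy : y ∈ Set.Icc (0:ℝ) 1 := hsq.2
      by_cases hxA : x ≤ α₁ <;> by_cases hyA : y ≤ α₁
      · -- both in A block
        left
        rw [Set.mem_preimage]
        have ex : α₁⁻¹ * x + 0 = x / α₁ := by ring
        have ey : α₁⁻¹ * y + 0 = y / α₁ := by ring
        refine ⟨⟨?_, ?_⟩, ?_⟩
        · rw [ex]; exact ⟨div_nonneg hx.1 hα₁.le, (div_le_one hα₁).mpr hxA⟩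
        · rw [ey]; exact ⟨div_nonneg hy.1 hα₁.le, (div_le_one hα₁).mpr hyA⟩
        · show W₁ _ _ ≠ W₁ _ _
          rw [ex, ey]
          intro heq
          apply hne
          rw [hWa x ⟨hx.1, hxA⟩ y ⟨hy.1, hyA⟩, hWa y ⟨hy.1, hyA⟩ x ⟨hx.1, hxA⟩, heq]
      · -- x in A, y in B : W vanishes both ways
        exfalso
        apply hne
        have hyB : y ∈ Set.Ioc α₁ (1:ℝ) := ⟨lt_of_not_ge hyA, hy.2⟩
        have hxA' : x ∈ Set.Icc (0:ℝ) α₁ := ⟨hx.1, hxA⟩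
        rw [hWc x y (fun h => hyA h.2.2) (fun h => absurd h.1.1 (not_lt.mpr hxA)),
          hWc y x (fun h => hyA h.1.2) (fun h => absurd h.2.1 (not_lt.mpr hxA))]
      · -- x in B, y in A
        exfalso
        apply hne
        rw [hWc x y (fun h => hxA h.1.2) (fun h => absurd h.2.1 (not_lt.mpr hyA)),
          hWc y x (fun h => hxA h.2.2) (fun h => absurd h.1.1 (not_lt.mpr hyA))]
      · -- both in B block
        right
        rw [Set.mem_preimage]
        have hxB : x ∈ Set.Ioc α₁ (1:ℝ) := ⟨lt_of_not_ge hxA, hx.2⟩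
        have hyB : y ∈ Set.Ioc α₁ (1:ℝ) := ⟨lt_of_not_ge hyA, hy.2⟩
        have ex : α₂⁻¹ * x + -(α₁/α₂) = (x - α₁) / α₂ := by ring
        have ey : α₂⁻¹ * y + -(α₁/α₂) = (y - α₁) / α₂ := by ring
        refine ⟨⟨?_, ?_⟩, ?_⟩
        · rw [ex]
          exact ⟨div_nonneg (by linarith [hxB.1]) hα₂.le,
            (div_le_one hα₂).mpr (by linarith [hxB.2])⟩
        · rw [ey]
          exact ⟨div_nonneg (by linarith [hyB.1]) hα₂.le,
            (div_le_one hα₂).mpr (by linarith [hyB.2])⟩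
        · show W₂ _ _ ≠ W₂ _ _
          rw [ex, ey]
          intro heq
          apply hne
          rw [hWb x hxB y hyB, hWb y hyB x hxB, heq]
    exact (ae_restrict_iff' hsqm).mpr hmain
  -- bounds on the extreme eigenvalues of W
  have hm₁ := h₁.1
  have hb₁ := h₁.2.1
  have hm₂ := h₂.1
  have hb₂ := h₂.2.1
  have hmu_le : graphonMu W ≤ max (α₁ * graphonMu W₁) (α₂ * graphonMu W₂) := by
    refine csSup_le qset_nonempty ?_
    rintro r ⟨f, hf, rfl⟩
    obtain ⟨t₁, t₂, ht₁, ht₂, hts, hlow, hup⟩ :=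
      quad_bounds h₁ h₂ hmW hbW hα₁ hα₂ hsum hWa hWb hWc hf
    set M := max (α₁ * graphonMu W₁) (α₂ * graphonMu W₂) with hM
    have e1 : α₁ * t₁ * graphonMu W₁ = t₁ * (α₁ * graphonMu W₁) := by ring
    have e2 : α₂ * t₂ * graphonMu W₂ = t₂ * (α₂ * graphonMu W₂) := by ring
    have l1 := mul_le_mul_of_nonneg_left
      (le_max_left (α₁ * graphonMu W₁) (α₂ * graphonMu W₂)) ht₁
    have l2 := mul_le_mul_of_nonneg_left
      (le_max_right (α₁ * graphonMu W₁) (α₂ * graphonMu W₂)) ht₂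
    have e3 : t₁ * M + t₂ * M = M := by rw [← add_mul, hts, one_mul]
    linarith
  have hnu_ge : min (α₁ * graphonNu W₁) (α₂ * graphonNu W₂) ≤ graphonNu W := by
    refine le_csInf qset_nonempty ?_
    rintro r ⟨f, hf, rfl⟩
    obtain ⟨t₁, t₂, ht₁, ht₂, hts, hlow, hup⟩ :=
      quad_bounds h₁ h₂ hmW hbW hα₁ hα₂ hsum hWa hWb hWc hf
    set m' := min (α₁ * graphonNu W₁) (α₂ * graphonNu W₂) with hm'
    have e1 : α₁ * t₁ * graphonNu W₁ = t₁ * (α₁ * graphonNu W₁) := by ring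
    have e2 : α₂ * t₂ * graphonNu W₂ = t₂ * (α₂ * graphonNu W₂) := by ring
    have l1 := mul_le_mul_of_nonneg_left
      (min_le_left (α₁ * graphonNu W₁) (α₂ * graphonNu W₂)) ht₁
    have l2 := mul_le_mul_of_nonneg_left
      (min_le_right (α₁ * graphonNu W₁) (α₂ * graphonNu W₂)) ht₂
    have e3 : t₁ * m' + t₂ * m' = m' := by rw [← add_mul, hts, one_mul]
    linarith
  have hmu₁0 : 0 ≤ graphonMu W₁ := mu_nonneg hm₁ hb₁
  have hmu₂0 : 0 ≤ graphonMu W₂ := mu_nonneg hm₂ hb₂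
  have hnu₁0 : graphonNu W₁ ≤ 0 := nu_nonpos hm₁ hb₁
  have hnu₂0 : graphonNu W₂ ≤ 0 := nu_nonpos hm₂ hb₂
  have hkey : graphonSpr W ≤ max (α₁ * graphonMu W₁) (α₂ * graphonMu W₂)
      - min (α₁ * graphonNu W₁) (α₂ * graphonNu W₂) := sub_le_sub hmu_le hnu_ge
  have hmaxle : max (α₁ * graphonMu W₁) (α₂ * graphonMu W₂)
      ≤ α₁ * graphonMu W₁ + α₂ * graphonMu W₂ :=
    max_le (le_add_of_nonneg_right (mul_nonneg hα₂.le hmu₂0))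
      (le_add_of_nonneg_left (mul_nonneg hα₁.le hmu₁0))
  have hn₂ : α₂ * graphonNu W₂ ≤ 0 := by nlinarith [mul_nonneg hα₂.le (neg_nonneg.mpr hnu₂0)]
  have hn₁ : α₁ * graphonNu W₁ ≤ 0 := by nlinarith [mul_nonneg hα₁.le (neg_nonneg.mpr hnu₁0)]
  have hminge : α₁ * graphonNu W₁ + α₂ * graphonNu W₂
      ≤ min (α₁ * graphonNu W₁) (α₂ * graphonNu W₂) :=
    le_min (add_le_of_nonpos_right hn₂) (add_le_of_nonpos_left hn₁)
  have hsprdef : α₁ * graphonSpr W₁ + α₂ * graphonSpr W₂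
      = (α₁ * graphonMu W₁ + α₂ * graphonMu W₂)
        - (α₁ * graphonNu W₁ + α₂ * graphonNu W₂) := by
    simp only [graphonSpr]
    ring
  refine ⟨⟨hmW, hbW, hsym⟩, by linarith, ?_⟩
  intro hne₁ hne₂
  have hp₁ := mu_pos hm₁ hb₁ hne₁
  have hp₂ := mu_pos hm₂ hb₂ hne₂
  have hmaxlt : max (α₁ * graphonMu W₁) (α₂ * graphonMu W₂)
      < α₁ * graphonMu W₁ + α₂ * graphonMu W₂ :=
    max_lt (by nlinarith [mul_pos hα₂ hp₂]) (by nlinarith [mul_pos hα₁ hp₁])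
  linarith
end
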